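/- arXiv:1705.06892 — 7 statements merged into one kernel-verified Lean document; each statement's English description precedes it below -/
import Mathlib

section
/- If a convex set D ⊆ X is the union of finitely many generalized polyhedral convex sets, then D is itself a generalized polyhedral convex set. -/
open Pointwise

/-- A generalized polyhedral convex set: the intersection of a closed affine
subspace with finitely many closed half-spaces given by continuous linear
functionals. -/
def IsGPCS {X : Type*} [AddCommGroup X] [Module ℝ X] [TopologicalSpace X]
    (D : Set X) : Prop :=
  ∃ (p : ℕ) (f : Fin p → (X →L[ℝ] ℝ)) (α : Fin p → ℝ)
    (x₀ : X) (W : Submodule ℝ X),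
    IsClosed (x₀ +ᵥ (W : Set X)) ∧
    D = {x ∈ x₀ +ᵥ (W : Set X) | ∀ i, f i x ≤ α i}

/-- A polyhedral convex set: a finite intersection of closed half-spaces. -/
def IsPCS {X : Type*} [AddCommGroup X] [Module ℝ X] [TopologicalSpace X]
    (D : Set X) : Prop :=
  ∃ (p : ℕ) (f : Fin p → (X →L[ℝ] ℝ)) (α : Fin p → ℝ),
    D = {x | ∀ i, f i x ≤ α i}

/-- `F` is a face of the convex set `C`. -/
def IsFaceOf {X : Type*} [AddCommGroup X] [Module ℝ X] (F C : Set X) : Prop :=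
  Convex ℝ F ∧ F ⊆ C ∧
    ∀ ⦃x y : X⦄, x ∈ C → y ∈ C → ∀ t : ℝ, 0 < t → t < 1 →
      (1 - t) • x + t • y ∈ F → x ∈ F ∧ y ∈ F



section Poly
variable {E F : Type*} [AddCommGroup E] [Module ℝ E] [AddCommGroup F] [Module ℝ F]

/-- An (algebraic) H-polyhedron. -/
def IsHPoly (s : Set E) : Prop :=
  ∃ (p : ℕ) (f : Fin p → (E →ₗ[ℝ] ℝ)) (α : Fin p → ℝ), s = {x | ∀ i, f i x ≤ α i}

theorem isHPoly_of_finite {ι : Type} [Finite ι] (f : ι → E →ₗ[ℝ] ℝ) (α : ι → ℝ) :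
    IsHPoly {x | ∀ i, f i x ≤ α i} := by
  cases nonempty_fintype ι
  refine ⟨Fintype.card ι, f ∘ (Fintype.equivFin ι).symm, α ∘ (Fintype.equivFin ι).symm, ?_⟩
  ext x
  simp only [Set.mem_setOf_eq, Function.comp]
  exact ⟨fun h j => h _, fun h i => by simpa using h (Fintype.equivFin ι i)⟩

theorem isHPoly_univ : IsHPoly (Set.univ : Set E) :=
  ⟨0, ![], ![], by ext x; simp⟩

theorem isHPoly_empty : IsHPoly (∅ : Set E) :=
  ⟨1, fun _ => 0, fun _ => -1, by ext x; simp⟩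

theorem IsHPoly.inter {s t : Set E} (hs : IsHPoly s) (ht : IsHPoly t) : IsHPoly (s ∩ t) := by
  obtain ⟨p, f, α, rfl⟩ := hs; obtain ⟨q, g, β, rfl⟩ := ht
  have h := isHPoly_of_finite (Sum.elim f g) (Sum.elim α β)
  convert h using 1
  ext x
  constructor
  · rintro ⟨h1, h2⟩ (i | j)
    · exact h1 i
    · exact h2 j
  · intro h
    exact ⟨fun i => h (Sum.inl i), fun j => h (Sum.inr j)⟩

theorem IsHPoly.preimage {s : Set F} (hs : IsHPoly s) (g : E →ₗ[ℝ] F) :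
    IsHPoly (g ⁻¹' s) := by
  obtain ⟨p, f, α, rfl⟩ := hs
  exact ⟨p, fun i => (f i).comp g, α, by ext x; simp⟩

theorem exists_between_families {ι κ : Type} [Finite ι] [Finite κ] (a : ι → ℝ) (b : κ → ℝ)
    (h : ∀ i j, a i ≤ b j) : ∃ t, (∀ i, a i ≤ t) ∧ (∀ j, t ≤ b j) := by
  classical
  cases nonempty_fintype ι; cases nonempty_fintype κ
  rcases isEmpty_or_nonempty ι with hι | hι
  · rcases isEmpty_or_nonempty κ with hκ | hκ
    · exact ⟨0, fun i => (hι.false i).elim, fun j => (hκ.false j).elim⟩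
    · obtain ⟨j₀, -, hj₀⟩ := Finset.exists_min_image Finset.univ b ⟨Classical.arbitrary κ, Finset.mem_univ _⟩
      exact ⟨b j₀, fun i => (hι.false i).elim, fun j => hj₀ j (Finset.mem_univ _)⟩
  · obtain ⟨i₀, -, hi₀⟩ := Finset.exists_max_image Finset.univ a ⟨Classical.arbitrary ι, Finset.mem_univ _⟩
    exact ⟨a i₀, fun i => hi₀ i (Finset.mem_univ _), fun j => h i₀ j⟩

/-- Fourier–Motzkin elimination: the shadow of a polyhedron along a direction. -/
theorem IsHPoly.shadow {s : Set E} (hs : IsHPoly s) (v : E) :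
    IsHPoly {x | ∃ t : ℝ, x + t • v ∈ s} := by
  classical
  obtain ⟨p, f, α, rfl⟩ := hs
  let g : ({i : Fin p // f i v = 0} ⊕ ({i : Fin p // 0 < f i v} × {j : Fin p // f j v < 0})) →
      E →ₗ[ℝ] ℝ :=
    Sum.elim (fun i => f i.1) (fun ij => f ij.1.1 v • f ij.2.1 - f ij.2.1 v • f ij.1.1)
  let β : ({i : Fin p // f i v = 0} ⊕ ({i : Fin p // 0 < f i v} × {j : Fin p // f j v < 0})) → ℝ :=
    Sum.elim (fun i => α i.1) (fun ij => f ij.1.1 v * α ij.2.1 - f ij.2.1 v * α ij.1.1)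
  have key : {x | ∃ t : ℝ, x + t • v ∈ {x | ∀ i, f i x ≤ α i}} = {x | ∀ k, g k x ≤ β k} := by
    ext x
    simp only [Set.mem_setOf_eq]
    constructor
    · rintro ⟨t, ht⟩ k
      have ht' : ∀ i, f i x + t * f i v ≤ α i := by
        intro i
        have := ht i
        simpa [map_add, map_smul, smul_eq_mul] using this
      rcases k with ⟨i, hi⟩ | ⟨⟨i, hi⟩, ⟨j, hj⟩⟩
      · have := ht' i
        rw [hi] at this
        simpa [g, β] using by linarith
      · simp only [g, β, Sum.elim_inr, LinearMap.sub_apply, LinearMap.smul_apply, smul_eq_mul]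
        nlinarith [ht' i, ht' j, mul_le_mul_of_nonneg_left (ht' j) hi.le,
          mul_le_mul_of_nonneg_left (ht' i) (by linarith : (0:ℝ) ≤ -(f j v))]
    · intro hx
      have hzero : ∀ i, f i v = 0 → f i x ≤ α i := fun i hi => by
        simpa [g, β] using hx (Sum.inl ⟨i, hi⟩)
      have cross : ∀ (i : {i : Fin p // 0 < f i v}) (j : {j : Fin p // f j v < 0}),
          (α j.1 - f j.1 x) / f j.1 v ≤ (α i.1 - f i.1 x) / f i.1 v := by
        intro i j
        have hc := hx (Sum.inr (i, j))
        simp only [g, β, Sum.elim_inr, LinearMap.sub_apply, LinearMap.smul_apply,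
          smul_eq_mul] at hc
        have hrw : (α j.1 - f j.1 x) / f j.1 v = (f j.1 x - α j.1) / (-(f j.1 v)) := by
          rw [← neg_div_neg_eq]; ring_nf
        rw [hrw, div_le_div_iff₀ (by linarith [j.2]) i.2]
        nlinarith [hc]
      obtain ⟨t, htlb, htub⟩ := exists_between_families
        (fun j : {j : Fin p // f j v < 0} => (α j.1 - f j.1 x) / f j.1 v)
        (fun i : {i : Fin p // 0 < f i v} => (α i.1 - f i.1 x) / f i.1 v)
        (fun j i => cross i j)
      refine ⟨t, fun i => ?_⟩
      simp only [map_add, map_smul, smul_eq_mul, Set.mem_setOf_eq]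
      rcases lt_trichotomy (f i v) 0 with hneg | hzv | hpos
      · have := htlb ⟨i, hneg⟩
        have h2 : t * f i v ≤ α i - f i x := by
          rw [div_le_iff_of_neg hneg] at this
          linarith [this]
        linarith
      · rw [hzv]
        have := hzero i hzv
        linarith
      · have := htub ⟨i, hpos⟩
        have h2 : t * f i v ≤ α i - f i x := by
          rw [le_div_iff₀ hpos] at this
          linarith
        linarith
  rw [key]
  exact isHPoly_of_finite g β

end Poly
section Poly2
variable {E F : Type*} [AddCommGroup E] [Module ℝ E] [AddCommGroup F] [Module ℝ F]

theorem IsHPoly.add_span {s : Set E} (hs : IsHPoly s) {t : Set E} (ht : t.Finite) :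
    IsHPoly (s + (Submodule.span ℝ t : Set E)) := by
  classical
  suffices h : ∀ (u : Finset E), IsHPoly (s + (Submodule.span ℝ (u : Set E) : Set E)) by
    obtain ⟨u, rfl⟩ := ht.exists_finset_coe
    exact h u
  intro u
  induction u using Finset.induction_on with
  | empty => simpa [Submodule.span_empty] using hs
  | @insert v t hvt ih =>
    rw [Finset.coe_insert]
    have heq : s + (Submodule.span ℝ (insert v (t : Set E)) : Set E) =
        {x | ∃ c : ℝ, x + c • v ∈ s + (Submodule.span ℝ (t : Set E) : Set E)} := by
      ext x
      constructor
      · rintro ⟨y, hy, z, hz, rfl⟩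
        rw [Submodule.span_insert] at hz
        obtain ⟨z1, hz1, z2, hz2, rfl⟩ := Submodule.mem_sup.1 hz
        obtain ⟨c, rfl⟩ := Submodule.mem_span_singleton.1 hz1
        exact ⟨-c, by refine ⟨y, hy, z2, hz2, by module⟩⟩
      · rintro ⟨c, y, hy, z, hz, h⟩
        have hxy : y + z = x + c • v := h
        refine ⟨y, hy, z + (-c) • v, ?_, ?_⟩
        · rw [Submodule.span_insert]
          exact Submodule.add_mem _ (Submodule.mem_sup_right hz)
            (Submodule.mem_sup_left (Submodule.smul_mem _ _ (Submodule.mem_span_singleton_self v)))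
        · show y + (z + (-c) • v) = x
          have hx : x = y + z - c • v := by rw [hxy]; abel
          rw [hx]; module
    rw [heq]
    exact ih.shadow v

theorem isHPoly_submodule [FiniteDimensional ℝ E] (S : Submodule ℝ E) :
    IsHPoly (S : Set E) := by
  classical
  let Q := E ⧸ S
  let b := Module.finBasis ℝ (Module.Dual ℝ Q)
  let f : (Fin (Module.finrank ℝ (Module.Dual ℝ Q)) × Bool) → E →ₗ[ℝ] ℝ := fun k =>
    if k.2 then (b k.1).comp S.mkQ else -((b k.1).comp S.mkQ)
  have key : (S : Set E) = {x | ∀ k, f k x ≤ 0} := by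
    ext x
    simp only [Set.mem_setOf_eq, SetLike.mem_coe]
    constructor
    · intro hx k
      have h0 : S.mkQ x = 0 := by
        rwa [S.mkQ_apply, Submodule.Quotient.mk_eq_zero]
      rcases k with ⟨j, bb⟩
      rcases bb with _ | _ <;> simp [f, h0]
    · intro h
      have hall : ∀ j, (b j) (S.mkQ x) = 0 := by
        intro j
        have h1 := h (j, true)
        have h2 := h (j, false)
        simp only [f, Bool.false_eq_true, LinearMap.neg_apply, LinearMap.coe_comp,
          Function.comp_apply, if_true, if_false] at h1 h2
        linarith
      have hq : S.mkQ x = 0 := by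
        rw [← Module.forall_dual_apply_eq_zero_iff ℝ]
        intro φ
        have := b.sum_repr φ
        rw [← this]
        simp only [Finsupp.sum, LinearMap.coe_sum, Finset.sum_apply, LinearMap.smul_apply]
        exact Finset.sum_eq_zero fun j _ => by rw [hall j]; simp
      rwa [S.mkQ_apply, Submodule.Quotient.mk_eq_zero] at hq
  rw [key]
  exact isHPoly_of_finite f 0

theorem IsHPoly.image [FiniteDimensional ℝ E] [FiniteDimensional ℝ F]
    {s : Set E} (hs : IsHPoly s) (g : E →ₗ[ℝ] F) : IsHPoly (g '' s) := by
  classical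
  set fst := LinearMap.fst ℝ E F
  set snd := LinearMap.snd ℝ E F
  have hT : IsHPoly ({z : E × F | z.1 ∈ s} ∩ (LinearMap.ker (g.comp fst - snd) : Set (E × F))) :=
    (hs.preimage fst).inter (isHPoly_submodule _)
  set T := {z : E × F | z.1 ∈ s} ∩ (LinearMap.ker (g.comp fst - snd) : Set (E × F)) with hTdef
  have hbig : IsHPoly (T + (Submodule.span ℝ
      (Set.range (fun x : Fin (Module.finrank ℝ E) => ((Module.finBasis ℝ E x, 0) : E × F))) :
      Set (E × F))) :=
    hT.add_span (Set.finite_range _)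
  have heq : g '' s = (LinearMap.inr ℝ E F) ⁻¹' (T + (Submodule.span ℝ
      (Set.range (fun x : Fin (Module.finrank ℝ E) => ((Module.finBasis ℝ E x, 0) : E × F))) :
      Set (E × F))) := by
    have hspan : Submodule.span ℝ
        (Set.range (fun x : Fin (Module.finrank ℝ E) => ((Module.finBasis ℝ E x, 0) : E × F))) =
        (⊤ : Submodule ℝ E).map (LinearMap.inl ℝ E F) := by
      have : (fun x : Fin (Module.finrank ℝ E) => ((Module.finBasis ℝ E x, 0) : E × F)) =
          (LinearMap.inl ℝ E F) ∘ (Module.finBasis ℝ E) := rfl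
      rw [this, Set.range_comp, ← Submodule.map_span, Module.Basis.span_eq]
    ext y
    simp only [Set.mem_preimage, LinearMap.inr_apply]
    constructor
    · rintro ⟨x, hx, rfl⟩
      refine ⟨(x, g x), ⟨hx, ?_⟩, (-x, 0), ?_, by simp⟩
      · simp [LinearMap.mem_ker, fst, snd]
      · rw [hspan]
        exact ⟨-x, trivial, rfl⟩
    · rintro ⟨z, ⟨hz1, hz2⟩, w, hw, hzw⟩
      rw [hspan] at hw
      obtain ⟨e, -, rfl⟩ := hw
      have hz2' : g z.1 = z.2 := by
        have h := hz2
        simp only [SetLike.mem_coe, LinearMap.mem_ker, LinearMap.sub_apply, LinearMap.coe_comp,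
          Function.comp_apply, LinearMap.fst_apply, LinearMap.snd_apply, sub_eq_zero,
          fst, snd] at h
        exact h
      have h1 : z.1 + e = 0 := congrArg Prod.fst hzw
      have h2 : z.2 + 0 = y := congrArg Prod.snd hzw
      rw [add_zero] at h2
      exact ⟨z.1, hz1, by rw [hz2', h2]⟩
  rw [heq]
  exact hbig.preimage _

theorem IsHPoly.vadd {s : Set E} (hs : IsHPoly s) (a : E) : IsHPoly (a +ᵥ s) := by
  obtain ⟨p, f, α, rfl⟩ := hs
  refine ⟨p, f, fun i => α i + f i a, ?_⟩
  ext x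
  simp only [Set.mem_vadd_set, Set.mem_setOf_eq]
  constructor
  · rintro ⟨y, hy, rfl⟩ i
    have := hy i
    simp only [vadd_eq_add, map_add]
    linarith
  · intro h
    refine ⟨x - a, fun i => ?_, by simp⟩
    have := h i
    simp only [map_sub] at *
    linarith

theorem IsHPoly.isClosed {G : Type*} [NormedAddCommGroup G] [NormedSpace ℝ G]
    [FiniteDimensional ℝ G] {s : Set G} (hs : IsHPoly s) : IsClosed s := by
  obtain ⟨p, f, α, rfl⟩ := hs
  have : {x : G | ∀ i, f i x ≤ α i} = ⋂ i, {x | f i x ≤ α i} := by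
    ext x; simp
  rw [this]
  exact isClosed_iInter fun i =>
    IsClosed.preimage (f i).continuous_of_finiteDimensional isClosed_Iic

end Poly2
section Dual
open RealInnerProductSpace

variable {H : Type*} [NormedAddCommGroup H] [InnerProductSpace ℝ H] [FiniteDimensional ℝ H]

/-- The (negative) dual cone of a set. -/
def dualSet (s : Set H) : Set H := {y | ∀ x ∈ s, ⟪x, y⟫ ≤ 0}

/-- The finitely generated cone on a family of vectors. -/
def fgCone {q : ℕ} (a : Fin q → H) : Set H :=
  {x | ∃ lam : Fin q → ℝ, (∀ k, 0 ≤ lam k) ∧ x = ∑ k, lam k • a k}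

theorem exists_inner_eq (f : H →ₗ[ℝ] ℝ) : ∃ v : H, ∀ x, f x = ⟪v, x⟫ := by
  refine ⟨(InnerProductSpace.toDual ℝ H).symm (LinearMap.toContinuousLinearMap f), fun x => ?_⟩
  rw [InnerProductSpace.toDual_symm_apply]
  rfl

theorem IsHPoly.cone_rep {s : Set H} (hs : IsHPoly s) (h0 : (0:H) ∈ s)
    (hcone : ∀ ⦃c : ℝ⦄, 0 ≤ c → ∀ ⦃x⦄, x ∈ s → c • x ∈ s) :
    ∃ (q : ℕ) (a : Fin q → H), s = {x | ∀ k, ⟪a k, x⟫ ≤ 0} := by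
  obtain ⟨p, f, α, rfl⟩ := hs
  have hα : ∀ i, 0 ≤ α i := fun i => by simpa using h0 i
  have key : {x | ∀ i, f i x ≤ α i} = {x | ∀ i, f i x ≤ 0} := by
    ext x
    simp only [Set.mem_setOf_eq]
    constructor
    · intro hx i
      by_contra hpos
      push_neg at hpos
      have hc : (0:ℝ) ≤ (α i + 1) / f i x := div_nonneg (by linarith [hα i]) hpos.le
      have := hcone hc hx i
      simp only [map_smul, smul_eq_mul] at this
      rw [div_mul_cancel₀ _ (ne_of_gt hpos)] at this
      linarith
    · exact fun hx i => le_trans (hx i) (hα i)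
  choose a ha using fun i => exists_inner_eq (f i)
  refine ⟨p, a, ?_⟩
  rw [key]
  ext x
  simp only [Set.mem_setOf_eq]
  exact ⟨fun h i => by rw [← ha i]; exact h i, fun h i => by rw [ha i]; exact h i⟩

theorem fgCone_convex {q : ℕ} (a : Fin q → H) : Convex ℝ (fgCone a) := by
  rintro x ⟨lam, hlam, rfl⟩ y ⟨mu, hmu, rfl⟩ c d hc hd hcd
  refine ⟨fun k => c * lam k + d * mu k,
    fun k => add_nonneg (mul_nonneg hc (hlam k)) (mul_nonneg hd (hmu k)), ?_⟩
  rw [Finset.smul_sum, Finset.smul_sum, ← Finset.sum_add_distrib]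
  congr 1; ext k
  rw [add_smul, smul_smul, smul_smul]

theorem fgCone_isHPoly {q : ℕ} (a : Fin q → H) : IsHPoly (fgCone a) := by
  classical
  have horth : IsHPoly {lam : Fin q → ℝ | ∀ k, 0 ≤ lam k} := by
    have := isHPoly_of_finite (fun k : Fin q => -(LinearMap.proj k : (Fin q → ℝ) →ₗ[ℝ] ℝ))
      (fun _ => (0:ℝ))
    convert this using 1
    · rfl
    ext lam
    simp [neg_le, neg_zero]
  let g : (Fin q → ℝ) →ₗ[ℝ] H :=
    ∑ k : Fin q, LinearMap.smulRight (LinearMap.proj k : (Fin q → ℝ) →ₗ[ℝ] ℝ) (a k)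
  have himg : fgCone a = g '' {lam : Fin q → ℝ | ∀ k, 0 ≤ lam k} := by
    ext x
    constructor
    · rintro ⟨lam, hlam, rfl⟩
      exact ⟨lam, hlam, by simp [g, LinearMap.sum_apply]⟩
    · rintro ⟨lam, hlam, rfl⟩
      exact ⟨lam, hlam, by simp [g, LinearMap.sum_apply]⟩
  rw [himg]
  exact horth.image g

theorem mem_fgCone_single {q : ℕ} (a : Fin q → H) (k : Fin q) {c : ℝ} (hc : 0 ≤ c) :
    c • a k ∈ fgCone a := by
  classical
  refine ⟨fun j => if j = k then c else 0, fun j => ?_, ?_⟩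
  · by_cases h : j = k <;> simp [h, hc]
  · rw [Finset.sum_eq_single k]
    · simp
    · intro b _ hb; simp [hb]
    · intro hk; exact absurd (Finset.mem_univ k) hk

theorem zero_mem_fgCone {q : ℕ} (a : Fin q → H) : (0:H) ∈ fgCone a :=
  ⟨0, fun _ => le_refl _, by simp⟩

/-- Farkas: the dual of an H-cone is the finitely generated cone on its normals. -/
theorem dualSet_Hcone {q : ℕ} (a : Fin q → H) :
    dualSet {x : H | ∀ k, ⟪a k, x⟫ ≤ 0} = fgCone a := by
  ext y
  constructor
  · intro hy
    by_contra hy'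
    obtain ⟨f, u, hfu, huy⟩ := geometric_hahn_banach_closed_point (fgCone_convex a)
      (fgCone_isHPoly a).isClosed hy'
    have hu0 : 0 < u := by simpa using hfu 0 (zero_mem_fgCone a)
    have hfa : ∀ k, f (a k) ≤ 0 := by
      intro k
      by_contra hfk
      push_neg at hfk
      have hmem := mem_fgCone_single a k (le_of_lt (div_pos (by linarith : (0:ℝ) < u + 1) hfk))
      have := hfu _ hmem
      rw [map_smul, smul_eq_mul, div_mul_cancel₀ _ (ne_of_gt hfk)] at this
      linarith
    obtain ⟨v, hv₀⟩ := exists_inner_eq (f : H →ₗ[ℝ] ℝ)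
    have hv : ∀ x : H, f x = ⟪v, x⟫ := fun x => by rw [← hv₀ x]; simp
    have hvmem : ∀ k, ⟪a k, v⟫ ≤ 0 := fun k => by
      rw [real_inner_comm, ← hv (a k)]; exact hfa k
    have h1 := hy v hvmem
    have h2 : f y ≤ 0 := by rw [hv y]; exact h1
    linarith
  · rintro ⟨lam, hlam, rfl⟩ x hx
    rw [inner_sum]
    refine Finset.sum_nonpos fun k _ => ?_
    rw [real_inner_smul_right]
    exact mul_nonpos_of_nonneg_of_nonpos (hlam k) (by rw [real_inner_comm]; exact hx k)

theorem dualSet_fgCone {q : ℕ} (a : Fin q → H) :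
    dualSet (fgCone a) = {x : H | ∀ k, ⟪a k, x⟫ ≤ 0} := by
  ext y
  constructor
  · intro hy k
    exact hy (a k) (by simpa using mem_fgCone_single a k (zero_le_one (α := ℝ)))
  · rintro hy x ⟨lam, hlam, rfl⟩
    rw [sum_inner]
    refine Finset.sum_nonpos fun k _ => ?_
    rw [real_inner_smul_left]
    exact mul_nonpos_of_nonneg_of_nonpos (hlam k) (hy k)

/-- The bipolar theorem for closed convex cones. -/
theorem dualSet_dualSet {C : Set H} (hC : IsClosed C) (hconv : Convex ℝ C) (h0 : (0:H) ∈ C)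
    (hcone : ∀ ⦃c : ℝ⦄, 0 ≤ c → ∀ ⦃x⦄, x ∈ C → c • x ∈ C) :
    dualSet (dualSet C) = C := by
  ext y
  constructor
  · intro hy
    by_contra hy'
    obtain ⟨f, u, hfu, huy⟩ := geometric_hahn_banach_closed_point hconv hC hy'
    have hu0 : 0 < u := by simpa using hfu 0 h0
    have hfa : ∀ x ∈ C, f x ≤ 0 := by
      intro x hx
      by_contra hfk
      push_neg at hfk
      have := hfu _ (hcone (le_of_lt (div_pos (by linarith : (0:ℝ) < u + 1) hfk)) hx)
      rw [map_smul, smul_eq_mul, div_mul_cancel₀ _ (ne_of_gt hfk)] at this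
      linarith
    obtain ⟨v, hv₀⟩ := exists_inner_eq (f : H →ₗ[ℝ] ℝ)
    have hv : ∀ x : H, f x = ⟪v, x⟫ := fun x => by rw [← hv₀ x]; simp
    have hvmem : v ∈ dualSet C := fun x hx => by
      rw [real_inner_comm, ← hv x]; exact hfa x hx
    have h1 := hy v hvmem
    have h2 : f y ≤ 0 := by rw [hv y]; exact h1
    linarith
  · intro hy x hx
    rw [real_inner_comm]
    exact hx y hy

end Dual
section KleeA
open RealInnerProductSpace

variable {E F : Type*} [AddCommGroup E] [Module ℝ E] [AddCommGroup F] [Module ℝ F]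

theorem isHPoly_iInter {ι : Type} [Finite ι] {s : ι → Set E} (h : ∀ i, IsHPoly (s i)) :
    IsHPoly (⋂ i, s i) := by
  choose p f α hf using h
  have hfin := isHPoly_of_finite (fun k : Σ i : ι, Fin (p i) => f k.1 k.2) (fun k => α k.1 k.2)
  convert hfin using 1
  ext x
  simp only [Set.mem_iInter, Set.mem_setOf_eq, Sigma.forall]
  constructor
  · intro hx i j
    have := hx i
    rw [hf i] at this
    exact this j
  · intro hx i
    rw [hf i]
    exact fun j => hx i j

theorem IsHPoly.linearEquiv_image (e : E ≃ₗ[ℝ] F) {s : Set E} (hs : IsHPoly s) :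
    IsHPoly (e '' s) := by
  have heq : e '' s = (e.symm : F →ₗ[ℝ] E) ⁻¹' s := by
    ext y
    constructor
    · rintro ⟨x, hx, rfl⟩
      simpa using hx
    · intro hy
      exact ⟨e.symm y, hy, by simp⟩
  rw [heq]
  exact hs.preimage _

theorem klee_cones {H : Type*} [NormedAddCommGroup H] [InnerProductSpace ℝ H]
    [FiniteDimensional ℝ H] {ι : Type} [Fintype ι] (C : ι → Set H)
    (hpoly : ∀ i, IsHPoly (C i))
    (hcone : ∀ i, ∀ ⦃c : ℝ⦄, 0 ≤ c → ∀ ⦃x⦄, x ∈ C i → c • x ∈ C i)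
    (h0 : ∀ i, (0:H) ∈ C i)
    (hconv : Convex ℝ (⋃ i, C i)) : IsHPoly (⋃ i, C i) := by
  rcases isEmpty_or_nonempty ι with hι | hι
  · rw [Set.iUnion_of_empty]
    exact isHPoly_empty
  choose q a ha using fun i => (hpoly i).cone_rep (h0 i) (hcone i)
  set U := ⋃ i, C i with hUdef
  have hUclosed : IsClosed U := isClosed_iUnion_of_finite fun i => (hpoly i).isClosed
  have hU0 : (0:H) ∈ U := Set.mem_iUnion.2 ⟨Classical.arbitrary ι, h0 _⟩
  have hUcone : ∀ ⦃c : ℝ⦄, 0 ≤ c → ∀ ⦃x⦄, x ∈ U → c • x ∈ U := by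
    intro c hc x hx
    obtain ⟨i, hi⟩ := Set.mem_iUnion.1 hx
    exact Set.mem_iUnion.2 ⟨i, hcone i hc hi⟩
  have hdU : dualSet U = ⋂ i, fgCone (a i) := by
    ext y
    simp only [dualSet, Set.mem_setOf_eq, Set.mem_iInter]
    constructor
    · intro h i
      rw [← dualSet_Hcone (a i), ← ha i]
      exact fun x hx => h x (Set.mem_iUnion.2 ⟨i, hx⟩)
    · intro h x hx
      obtain ⟨i, hi⟩ := Set.mem_iUnion.1 hx
      have hyi := h i
      rw [← dualSet_Hcone (a i), ← ha i] at hyi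
      exact hyi x hi
  have hpolyD : IsHPoly (dualSet U) := by
    rw [hdU]
    exact isHPoly_iInter fun i => fgCone_isHPoly (a i)
  have hD0 : (0:H) ∈ dualSet U := fun x _ => by simp
  have hDcone : ∀ ⦃c : ℝ⦄, 0 ≤ c → ∀ ⦃y⦄, y ∈ dualSet U → c • y ∈ dualSet U := by
    intro c hc y hy x hx
    rw [real_inner_smul_right]
    exact mul_nonpos_of_nonneg_of_nonpos hc (hy x hx)
  obtain ⟨r, b, hb⟩ := hpolyD.cone_rep hD0 hDcone
  have hfinal : U = fgCone b := by
    rw [← dualSet_dualSet hUclosed hconv hU0 hUcone, hb, dualSet_Hcone]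
  rw [hfinal]
  exact fgCone_isHPoly b

theorem klee_cones_module [FiniteDimensional ℝ E] {ι : Type} [Fintype ι] (C : ι → Set E)
    (hpoly : ∀ i, IsHPoly (C i))
    (hcone : ∀ i, ∀ ⦃c : ℝ⦄, 0 ≤ c → ∀ ⦃x⦄, x ∈ C i → c • x ∈ C i)
    (h0 : ∀ i, (0:E) ∈ C i)
    (hconv : Convex ℝ (⋃ i, C i)) : IsHPoly (⋃ i, C i) := by
  have e : E ≃ₗ[ℝ] EuclideanSpace ℝ (Fin (Module.finrank ℝ E)) :=
    LinearEquiv.ofFinrankEq _ _ (by simp [finrank_euclideanSpace_fin])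
  have himg : IsHPoly (⋃ i, (e '' C i)) := by
    apply klee_cones (fun i => e '' C i)
    · exact fun i => (hpoly i).linearEquiv_image e
    · rintro i c hc x ⟨w, hw, rfl⟩
      exact ⟨c • w, hcone i hc hw, by simp⟩
    · exact fun i => ⟨0, h0 i, by simp⟩
    · have : (⋃ i, e '' C i) = e '' (⋃ i, C i) := by
        rw [Set.image_iUnion]
      rw [this]
      exact hconv.linear_image (e : E →ₗ[ℝ] EuclideanSpace ℝ (Fin (Module.finrank ℝ E)))
  have hpre : (⋃ i, C i) = (e : E →ₗ[ℝ] EuclideanSpace ℝ (Fin (Module.finrank ℝ E))) ⁻¹'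
      (⋃ i, e '' C i) := by
    ext x
    simp only [Set.mem_preimage, Set.mem_iUnion, LinearEquiv.coe_coe]
    constructor
    · rintro ⟨i, hi⟩
      exact ⟨i, x, hi, rfl⟩
    · rintro ⟨i, w, hw, hwx⟩
      have : w = x := e.injective hwx
      exact ⟨i, this ▸ hw⟩
  rw [hpre]
  exact himg.preimage _

end KleeA
section KleeB
variable {E : Type*} [AddCommGroup E] [Module ℝ E]

theorem exists_unbounded_index {ι : Type*} [Finite ι] (S : ι → Set ℝ)
    (hcover : ∀ t : ℝ, 0 ≤ t → ∃ i, t ∈ S i) :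
    ∃ i, ∀ B : ℝ, ∃ t, B ≤ t ∧ t ∈ S i := by
  classical
  by_contra h
  push_neg at h
  choose B hB using h
  cases nonempty_fintype ι
  have hne : Nonempty ι := by
    obtain ⟨i, -⟩ := hcover 0 le_rfl
    exact ⟨i⟩
  set M := Finset.univ.sup' (Finset.univ_nonempty (α := ι)) B with hM
  obtain ⟨i, hi⟩ := hcover (max M 0) (le_max_right _ _)
  exact hB i (max M 0)
    (le_max_of_le_left (Finset.le_sup' B (Finset.mem_univ i))) hi

theorem rec_of_ray {m : ℕ} (P : Fin m → Set E) (p : Fin m → ℕ)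
    (f : ∀ i, Fin (p i) → E →ₗ[ℝ] ℝ) (α : ∀ i, Fin (p i) → ℝ)
    (hf : ∀ i, P i = {x | ∀ j, f i j x ≤ α i j})
    {w z : E} (h : ∀ t : ℝ, 0 ≤ t → w + t • z ∈ ⋃ i, P i) :
    ∃ i, (P i).Nonempty ∧ ∀ j, f i j z ≤ 0 := by
  obtain ⟨i, hi⟩ := exists_unbounded_index (fun i => {t : ℝ | 0 ≤ t ∧ w + t • z ∈ P i})
    (fun t ht => by
      obtain ⟨i, hit⟩ := Set.mem_iUnion.1 (h t ht)
      exact ⟨i, ht, hit⟩)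
  refine ⟨i, ?_, ?_⟩
  · obtain ⟨t, -, -, htP⟩ := hi 0
    exact ⟨w + t • z, htP⟩
  · intro j
    by_contra hj
    push_neg at hj
    obtain ⟨t, hBt, -, htP⟩ := hi ((α i j - f i j w) / (f i j z) + 1)
    rw [hf i] at htP
    have h1 : f i j w + t * f i j z ≤ α i j := by
      have := htP j
      simpa [map_add, map_smul, smul_eq_mul] using this
    have h2 : (α i j - f i j w) / f i j z * f i j z = α i j - f i j w :=
      div_mul_cancel₀ _ hj.ne'
    nlinarith [mul_le_mul_of_nonneg_right hBt hj.le]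

theorem add_rec_mem {m : ℕ} (P : Fin m → Set E) (p : Fin m → ℕ)
    (f : ∀ i, Fin (p i) → E →ₗ[ℝ] ℝ) (α : ∀ i, Fin (p i) → ℝ)
    (hf : ∀ i, P i = {x | ∀ j, f i j x ≤ α i j})
    (hconv : Convex ℝ (⋃ i, P i))
    {x z : E} (hx : x ∈ ⋃ i, P i)
    {i : Fin m} (hiP : (P i).Nonempty) (hz : ∀ j, f i j z ≤ 0) :
    x + z ∈ ⋃ i, P i := by
  classical
  obtain ⟨w, hw⟩ := hiP
  have hray : ∀ s : ℝ, 0 < s → s ≤ 1 → x + z + s • (w - x) ∈ ⋃ i, P i := by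
    intro s hs hs1
    have hw' : w + s⁻¹ • z ∈ P i := by
      rw [hf i] at hw ⊢
      intro j
      have h1 := hw j
      have hzj := hz j
      have hinv : (0:ℝ) ≤ s⁻¹ := inv_nonneg.2 hs.le
      simp only [map_add, map_smul, smul_eq_mul, Set.mem_setOf_eq] at h1 ⊢
      nlinarith [mul_nonneg hinv (neg_nonneg.2 hzj)]
    have hmem := hconv hx (Set.mem_iUnion.2 ⟨i, hw'⟩)
      (by linarith : (0:ℝ) ≤ 1 - s) hs.le (by ring)
    have hcomb : (1 - s) • x + s • (w + s⁻¹ • z) = x + z + s • (w - x) := by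
      have h1 : s • (s⁻¹ • z) = z := by rw [smul_smul, mul_inv_cancel₀ hs.ne', one_smul]
      rw [smul_add, h1, smul_sub, sub_smul, one_smul]
      abel
    rwa [hcomb] at hmem
  have hmemn : ∀ n : ℕ, x + z + ((n:ℝ)+1)⁻¹ • (w - x) ∈ ⋃ i, P i := fun n =>
    hray _ (by positivity) (by
      rw [inv_le_one_iff₀]
      right
      exact le_add_of_nonneg_left (Nat.cast_nonneg n))
  choose g hg using fun n => Set.mem_iUnion.1 (hmemn n)
  obtain ⟨l, hl⟩ := Finite.exists_infinite_fiber g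
  refine Set.mem_iUnion.2 ⟨l, ?_⟩
  rw [hf l]
  intro j
  by_contra hjlt
  push_neg at hjlt
  have hjlt' : α l j < f l j x + f l j z := by rwa [map_add] at hjlt
  set ε := f l j x + f l j z - α l j with hε
  have hεpos : 0 < ε := sub_pos.2 hjlt'
  set c := f l j w - f l j x with hc
  have hinfset : (g ⁻¹' {l}).Infinite := Set.infinite_coe_iff.1 hl
  obtain ⟨n, hnfib, hn⟩ := hinfset.exists_gt (Nat.ceil (|c| / ε))
  have hgl : g n = l := hnfib
  have hnpos : (0:ℝ) < (n:ℝ) + 1 := by positivity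
  have hinv : (0:ℝ) < ((n:ℝ)+1)⁻¹ := by positivity
  have h1 : f l j x + f l j z + ((n:ℝ)+1)⁻¹ * c ≤ α l j := by
    have hmem := hg n
    rw [hgl, hf l] at hmem
    have h2 := hmem j
    simp only [map_add, map_smul, map_sub, smul_eq_mul, Set.mem_setOf_eq] at h2
    rw [hc]
    linarith
  have hcle : |c| / ε ≤ (n:ℝ) := le_trans (Nat.le_ceil _) (by exact_mod_cast hn.le)
  have habs : |c| < ε * ((n:ℝ)+1) := by
    rw [div_le_iff₀ hεpos] at hcle
    nlinarith
  have k1 : ε ≤ ((n:ℝ)+1)⁻¹ * |c| := by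
    have e1 : ((n:ℝ)+1)⁻¹ * (-c) ≤ ((n:ℝ)+1)⁻¹ * |c| :=
      mul_le_mul_of_nonneg_left (neg_le_abs c) hinv.le
    nlinarith [h1]
  have k2 := mul_le_mul_of_nonneg_left k1 hnpos.le
  have e3 : ((n:ℝ)+1) * (((n:ℝ)+1)⁻¹ * |c|) = |c| := by field_simp
  nlinarith [k2, habs, e3]

end KleeB
section KleeC
variable {E : Type*} [AddCommGroup E] [Module ℝ E]

theorem klee [FiniteDimensional ℝ E] {m : ℕ} (P : Fin m → Set E) (hP : ∀ i, IsHPoly (P i))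
    (hconv : Convex ℝ (⋃ i, P i)) : IsHPoly (⋃ i, P i) := by
  classical
  choose p f α hf using hP
  set D := ⋃ i, P i with hD
  set ι := {i : Fin m // (P i).Nonempty} with hι
  haveI : Fintype ι := Fintype.ofFinite _
  rcases isEmpty_or_nonempty ι with hempty | hne
  · have hDe : D = ∅ := by
      ext x
      simp only [hD, Set.mem_iUnion, Set.mem_empty_iff_false, iff_false]
      rintro ⟨i, hi⟩
      exact hempty.false ⟨i, ⟨x, hi⟩⟩
    rw [hDe]
    exact isHPoly_empty
  set C : ι → Set (E × ℝ) := fun i => {z | (∀ j, f i.1 j z.1 ≤ α i.1 j * z.2) ∧ 0 ≤ z.2}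
    with hC
  have hCpoly : ∀ i, IsHPoly (C i) := by
    intro i
    have hfin := isHPoly_of_finite (ι := Sum (Fin (p i.1)) Unit)
      (Sum.elim
        (fun j => (f i.1 j).comp (LinearMap.fst ℝ E ℝ) - α i.1 j • (LinearMap.snd ℝ E ℝ))
        (fun _ => -(LinearMap.snd ℝ E ℝ)))
      (fun _ => (0:ℝ))
    convert hfin using 1
    ext z
    simp only [hC, Set.mem_setOf_eq, Sum.forall, Sum.elim_inl, Sum.elim_inr,
      LinearMap.sub_apply, LinearMap.coe_comp, Function.comp_apply, LinearMap.fst_apply,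
      LinearMap.smul_apply, LinearMap.snd_apply, smul_eq_mul, LinearMap.neg_apply,
      neg_le, neg_zero]
    constructor
    · rintro ⟨h1, h2⟩
      exact ⟨fun j => by linarith [h1 j], fun _ => by linarith⟩
    · rintro ⟨h1, h2⟩
      exact ⟨fun j => by linarith [h1 j], by linarith [h2 ()]⟩
  have hC0 : ∀ i, (0 : E × ℝ) ∈ C i := fun i => ⟨fun j => by simp, le_refl 0⟩
  have hCcone : ∀ i, ∀ ⦃c : ℝ⦄, 0 ≤ c → ∀ ⦃z : E × ℝ⦄, z ∈ C i → c • z ∈ C i := by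
    rintro i c hc z ⟨h1, h2⟩
    refine ⟨fun j => ?_, mul_nonneg hc h2⟩
    have := mul_le_mul_of_nonneg_left (h1 j) hc
    simp only [Prod.smul_fst, Prod.smul_snd, smul_eq_mul, map_smul]
    nlinarith
  have hscale : ∀ (i : ι) (x : E) (s : ℝ), 0 < s → (x, s) ∈ C i → s⁻¹ • x ∈ P i.1 := by
    rintro i x s hs ⟨h1, -⟩
    rw [hf i.1]
    simp only [Set.mem_setOf_eq]
    intro j'
    rw [map_smul, smul_eq_mul]
    have h2 := mul_le_mul_of_nonneg_left (h1 j') (inv_nonneg.2 hs.le)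
    have e : s⁻¹ * (α i.1 j' * s) = α i.1 j' := by field_simp
    rw [e] at h2
    exact h2
  -- Convexity of the union of the homogenization cones
  have hconvC : Convex ℝ (⋃ i : ι, C i) := by
    rintro ⟨x, s⟩ hz1 ⟨y, t⟩ hz2 c d hc hd hcd
    obtain ⟨i, hi⟩ := Set.mem_iUnion.1 hz1
    obtain ⟨j, hj⟩ := Set.mem_iUnion.1 hz2
    have hix : ∀ j', f i.1 j' x ≤ α i.1 j' * s := hi.1
    have his : (0:ℝ) ≤ s := hi.2
    have hjy : ∀ j', f j.1 j' y ≤ α j.1 j' * t := hj.1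
    have hjt : (0:ℝ) ≤ t := hj.2
    rcases eq_or_lt_of_le hc with rfl | hc0
    · have hd1 : d = 1 := by linarith
      subst hd1
      simpa using Set.mem_iUnion.2 ⟨j, hj⟩
    rcases eq_or_lt_of_le hd with rfl | hd0
    · have hc1 : c = 1 := by linarith
      subst hc1
      simpa using Set.mem_iUnion.2 ⟨i, hi⟩
    have hsmul : c • ((x, s) : E × ℝ) + d • ((y, t) : E × ℝ) =
        ((c • x + d • y, c * s + d * t) : E × ℝ) := by
      simp [Prod.ext_iff, smul_eq_mul]
    rw [hsmul]
    rcases eq_or_lt_of_le (add_nonneg (mul_nonneg hc0.le his) (mul_nonneg hd0.le hjt))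
      with hτ0 | hτpos
    · -- degenerate: s = t = 0
      have hs0 : s = 0 := by
        by_contra hs'
        have hs1 : 0 < s := lt_of_le_of_ne his (Ne.symm hs')
        nlinarith [mul_pos hc0 hs1, mul_nonneg hd0.le hjt]
      have ht0 : t = 0 := by
        by_contra ht'
        have ht1 : 0 < t := lt_of_le_of_ne hjt (Ne.symm ht')
        nlinarith [mul_pos hd0 ht1, mul_nonneg hc0.le his]
      subst hs0; subst ht0
      have hxrec : ∀ j', f i.1 j' x ≤ 0 := fun j' => by simpa using hix j'
      have hyrec : ∀ j', f j.1 j' y ≤ 0 := fun j' => by simpa using hjy j'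
      obtain ⟨w, hw⟩ := i.2
      have hwD : w ∈ D := Set.mem_iUnion.2 ⟨i.1, hw⟩
      have hray : ∀ T : ℝ, 0 ≤ T → w + T • (c • x + d • y) ∈ D := by
        intro T hT
        have h1 : w + (T * c) • x ∈ D :=
          add_rec_mem P p f α hf hconv hwD i.2 (fun j' => by
            rw [map_smul, smul_eq_mul]
            exact mul_nonpos_of_nonneg_of_nonpos (mul_nonneg hT hc0.le) (hxrec j'))
        have h2 : (w + (T * c) • x) + (T * d) • y ∈ D :=
          add_rec_mem P p f α hf hconv h1 j.2 (fun j' => by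
            rw [map_smul, smul_eq_mul]
            exact mul_nonpos_of_nonneg_of_nonpos (mul_nonneg hT hd0.le) (hyrec j'))
        have heq : w + T • (c • x + d • y) = (w + (T * c) • x) + (T * d) • y := by
          rw [smul_add, smul_smul, smul_smul]
          abel
        rw [heq]
        exact h2
      obtain ⟨l, hlne, hlz⟩ := rec_of_ray P p f α hf hray
      refine Set.mem_iUnion.2 ⟨⟨l, hlne⟩, ⟨fun j' => ?_, ?_⟩⟩
      · simp only [mul_zero, add_zero, zero_add]
        simpa using hlz j'
      · simp
    · -- main case: positive total weight
      set τ := c * s + d * t with hτdef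
      have hu : τ⁻¹ • (c • x + d • y) ∈ D := by
        rcases eq_or_lt_of_le his with hs0 | hs1
        · -- s = 0, so t > 0
          have ht1 : 0 < t := by
            rcases eq_or_lt_of_le hjt with ht0 | ht1
            · exfalso; rw [hτdef] at hτpos; rw [← hs0, ← ht0] at hτpos; simp at hτpos
            · exact ht1
          have hyD : t⁻¹ • y ∈ P j.1 := hscale j y t ht1 hj
          have hxrec : ∀ j', f i.1 j' x ≤ 0 := fun j' => by
            have := hix j'
            rw [← hs0, mul_zero] at this
            exact this
          have hmem := add_rec_mem P p f α hf hconv (Set.mem_iUnion.2 ⟨j.1, hyD⟩) i.2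
            (z := (τ⁻¹ * c) • x) (fun j' => by
              rw [map_smul, smul_eq_mul]
              exact mul_nonpos_of_nonneg_of_nonpos
                (mul_nonneg (inv_nonneg.2 hτpos.le) hc0.le) (hxrec j'))
          have heq : τ⁻¹ • (c • x + d • y) = t⁻¹ • y + (τ⁻¹ * c) • x := by
            have hτt : τ = d * t := by rw [hτdef, ← hs0]; ring
            have e1 : τ⁻¹ * d = t⁻¹ := by
              rw [hτt, mul_inv]
              field_simp
            rw [smul_add, smul_smul, smul_smul, e1]
            abel
          rw [heq]
          exact hmem
        · rcases eq_or_lt_of_le hjt with ht0 | ht1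
          · -- t = 0, s > 0
            have hxD : s⁻¹ • x ∈ P i.1 := hscale i x s hs1 hi
            have hyrec : ∀ j', f j.1 j' y ≤ 0 := fun j' => by
              have := hjy j'
              rw [← ht0, mul_zero] at this
              exact this
            have hmem := add_rec_mem P p f α hf hconv (Set.mem_iUnion.2 ⟨i.1, hxD⟩) j.2
              (z := (τ⁻¹ * d) • y) (fun j' => by
                rw [map_smul, smul_eq_mul]
                exact mul_nonpos_of_nonneg_of_nonpos
                  (mul_nonneg (inv_nonneg.2 hτpos.le) hd0.le) (hyrec j'))
            have heq : τ⁻¹ • (c • x + d • y) = s⁻¹ • x + (τ⁻¹ * d) • y := by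
              have hτs : τ = c * s := by rw [hτdef, ← ht0]; ring
              have e1 : τ⁻¹ * c = s⁻¹ := by
                rw [hτs, mul_inv]
                field_simp
              rw [smul_add, smul_smul, smul_smul, e1]
            rw [heq]
            exact hmem
          · -- s > 0, t > 0
            have hxD : s⁻¹ • x ∈ P i.1 := hscale i x s hs1 ⟨hix, his⟩
            have hyD : t⁻¹ • y ∈ P j.1 := hscale j y t ht1 hj
            have hcomb := hconv (Set.mem_iUnion.2 ⟨i.1, hxD⟩) (Set.mem_iUnion.2 ⟨j.1, hyD⟩)
              (div_nonneg (mul_nonneg hc0.le hs1.le) hτpos.le)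
              (div_nonneg (mul_nonneg hd0.le ht1.le) hτpos.le)
              (by rw [← add_div, hτdef, div_self hτpos.ne'])
            have heq : τ⁻¹ • (c • x + d • y) =
                (c * s / τ) • (s⁻¹ • x) + (d * t / τ) • (t⁻¹ • y) := by
              rw [smul_add, smul_smul, smul_smul, smul_smul, smul_smul]
              congr 1
              · congr 1
                field_simp
              · congr 1
                field_simp
            rw [heq]
            exact hcomb
      obtain ⟨l, hl⟩ := Set.mem_iUnion.1 hu
      refine Set.mem_iUnion.2 ⟨⟨l, ⟨_, hl⟩⟩, ⟨fun j' => ?_, hτpos.le⟩⟩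
      have hl' := hl
      rw [hf l] at hl'
      have h3 := hl' j'
      rw [map_smul, smul_eq_mul] at h3
      have k := mul_le_mul_of_nonneg_left h3 hτpos.le
      have e2 : τ * (τ⁻¹ * f l j' (c • x + d • y)) = f l j' (c • x + d • y) := by
        field_simp
      rw [e2] at k
      calc f l j' (c • x + d • y) ≤ τ * α l j' := k
        _ = α l j' * τ := mul_comm _ _
  -- apply the cone theorem and dehomogenize
  have hpolyU := klee_cones_module C hCpoly hCcone hC0 hconvC
  have hDC : ∀ x : E, x ∈ D ↔ ((x, 1) : E × ℝ) ∈ ⋃ i : ι, C i := by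
    intro x
    constructor
    · intro hx
      obtain ⟨i, hi⟩ := Set.mem_iUnion.1 hx
      have hi' := hi
      rw [hf i] at hi'
      exact Set.mem_iUnion.2 ⟨⟨i, ⟨x, hi⟩⟩, ⟨fun j' => by rw [mul_one]; exact hi' j',
        zero_le_one⟩⟩
    · intro hx
      obtain ⟨i, hi⟩ := Set.mem_iUnion.1 hx
      have := hscale i x 1 one_pos hi
      rw [inv_one, one_smul] at this
      exact Set.mem_iUnion.2 ⟨i.1, this⟩
  obtain ⟨r, g, β, hg⟩ := hpolyU
  have hfinal : D = {x : E | ∀ k, ((g k).comp (LinearMap.inl ℝ E ℝ)) x ≤ β k - g k (0, 1)} := by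
    ext x
    rw [Set.mem_setOf_eq, hDC x, hg]
    simp only [Set.mem_setOf_eq, LinearMap.coe_comp, Function.comp_apply, LinearMap.inl_apply]
    have e : ((x, 1) : E × ℝ) = (x, 0) + (0, 1) := by simp
    constructor
    · intro h k
      have hk := h k
      rw [e, map_add] at hk
      linarith
    · intro h k
      rw [e, map_add]
      linarith [h k]
  rw [hfinal]
  exact isHPoly_of_finite _ _

end KleeC
section InfDim
variable {X : Type*} [AddCommGroup X] [Module ℝ X] [TopologicalSpace X]

/-- The sum of a closed submodule and a finite-dimensional submodule is closed. -/
theorem isClosed_sup_fd [IsTopologicalAddGroup X] [ContinuousSMul ℝ X] [T2Space X]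
    (L V : Submodule ℝ X) (hL : IsClosed (L : Set X)) [FiniteDimensional ℝ V] :
    IsClosed ((L ⊔ V : Submodule ℝ X) : Set X) := by
  haveI : IsClosed (L : Set X) := hL
  set W := V.map L.mkQ with hW
  haveI : FiniteDimensional ℝ W := Module.Finite.map V L.mkQ
  have hWclosed : IsClosed (W : Set (X ⧸ L)) := W.closed_of_finiteDimensional
  have key : ((L ⊔ V : Submodule ℝ X) : Set X) = L.mkQ ⁻¹' W := by
    ext x
    simp only [Set.mem_preimage, SetLike.mem_coe]
    constructor
    · intro hx
      obtain ⟨l, hl, v, hv, rfl⟩ := Submodule.mem_sup.1 hx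
      rw [map_add]
      have hl0 : L.mkQ l = 0 := by
        rw [Submodule.mkQ_apply, Submodule.Quotient.mk_eq_zero]
        exact hl
      rw [hl0, zero_add]
      exact Submodule.mem_map_of_mem hv
    · intro hx
      obtain ⟨v, hv, hvx⟩ := Submodule.mem_map.1 hx
      have hxv : x - v ∈ L := by
        rw [← Submodule.Quotient.mk_eq_zero, Submodule.Quotient.mk_sub]
        rw [Submodule.mkQ_apply, Submodule.mkQ_apply] at hvx
        rw [hvx, sub_self]
      have : x = (x - v) + v := by abel
      rw [this]
      exact Submodule.add_mem _ (Submodule.mem_sup_left hxv) (Submodule.mem_sup_right hv)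
  rw [key]
  exact hWclosed.preimage (Submodule.isOpenQuotientMap_mkQ L).continuous

/-- Recession principle for closed convex sets in a TVS. -/
theorem mem_of_ray [IsTopologicalAddGroup X] [ContinuousSMul ℝ X]
    {D : Set X} (hclosed : IsClosed D) (hconv : Convex ℝ D) {x y v : X}
    (hx : x ∈ D) (hray : ∀ t : ℝ, 0 ≤ t → y + t • v ∈ D) : x + v ∈ D := by
  have hmem : ∀ s : ℝ, 0 < s → s ≤ 1 → x + v + s • (y - x) ∈ D := by
    intro s hs hs1
    have hy' : y + s⁻¹ • v ∈ D := hray _ (inv_nonneg.2 hs.le)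
    have hcomb := hconv hx hy' (by linarith : (0:ℝ) ≤ 1 - s) hs.le (by ring)
    have heq : (1 - s) • x + s • (y + s⁻¹ • v) = x + v + s • (y - x) := by
      have h1 : s • (s⁻¹ • v) = v := by rw [smul_smul, mul_inv_cancel₀ hs.ne', one_smul]
      rw [smul_add, h1, smul_sub, sub_smul, one_smul]
      abel
    rwa [heq] at hcomb
  have htend : Filter.Tendsto (fun n : ℕ => x + v + (1/((n:ℝ)+1)) • (y - x))
      Filter.atTop (nhds (x + v)) := by
    have h1 : Filter.Tendsto (fun n : ℕ => 1/((n:ℝ)+1)) Filter.atTop (nhds 0) :=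
      tendsto_one_div_add_atTop_nhds_zero_nat
    have h2 := h1.smul_const (y - x)
    rw [zero_smul] at h2
    have h3 := (tendsto_const_nhds (x := x + v) (f := Filter.atTop (α := ℕ))).add h2
    simpa using h3
  refine hclosed.mem_of_tendsto htend (Filter.Eventually.of_forall fun n => ?_)
  exact hmem _ (by positivity) (by
    rw [div_le_one (by positivity)]
    linarith [Nat.cast_nonneg (α := ℝ) n])

/-- A continuous linear functional vanishing on a closed subspace and equal to 1 at a point
outside it. -/
theorem exists_functional_vanishing [IsTopologicalAddGroup X] [ContinuousSMul ℝ X]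
    [LocallyConvexSpace ℝ X]
    (M : Submodule ℝ X) (hM : IsClosed (M : Set X)) {e : X} (he : e ∉ M) :
    ∃ φ : X →L[ℝ] ℝ, (∀ m ∈ M, φ m = 0) ∧ φ e = 1 := by
  obtain ⟨f, u, hfu, hue⟩ := geometric_hahn_banach_closed_point (M.convex) hM he
  have hu0 : 0 < u := by simpa using hfu 0 M.zero_mem
  have hfM : ∀ m ∈ M, f m = 0 := by
    intro m hm
    by_contra hfm
    have h1 := hfu (((u + 1) / f m) • m) (M.smul_mem ((u + 1) / f m) hm)
    rw [map_smul, smul_eq_mul, div_mul_cancel₀ _ hfm] at h1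
    linarith
  have hfe : 0 < f e := lt_trans hu0 hue
  refine ⟨(f e)⁻¹ • f, fun m hm => ?_, ?_⟩
  · simp [hfM m hm]
  · simp [inv_mul_cancel₀ hfe.ne']

end InfDim
section Struct
variable {X : Type*} [AddCommGroup X] [Module ℝ X] [TopologicalSpace X]

theorem mem_vadd_submodule_iff (x₀ x : X) (W : Submodule ℝ X) :
    x ∈ x₀ +ᵥ (W : Set X) ↔ x - x₀ ∈ W := by
  rw [Set.mem_vadd_set_iff_neg_vadd_mem]
  simp [SetLike.mem_coe, neg_add_eq_sub]

theorem isGPCS_empty [T1Space X] : IsGPCS (∅ : Set X) := by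
  refine ⟨1, fun _ => 0, fun _ => -1, 0, ⊥, ?_, ?_⟩
  · have h : ((0:X) +ᵥ ((⊥ : Submodule ℝ X) : Set X)) = {0} := by
      ext x
      rw [mem_vadd_submodule_iff]
      simp
    rw [h]
    exact isClosed_singleton
  · ext x
    simp

theorem IsGPCS.isClosed [IsTopologicalAddGroup X] {D : Set X} (h : IsGPCS D) : IsClosed D := by
  obtain ⟨p, f, α, x₀, W, hWc, rfl⟩ := h
  have heq : {x ∈ x₀ +ᵥ (W : Set X) | ∀ i, f i x ≤ α i} =
      (x₀ +ᵥ (W : Set X)) ∩ ⋂ i, (f i) ⁻¹' (Set.Iic (α i)) := by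
    ext x
    simp [Set.mem_iInter, Set.mem_preimage, Set.mem_Iic]
  rw [heq]
  exact hWc.inter (isClosed_iInter fun i => isClosed_Iic.preimage (f i).continuous)

/-- Structure theorem for a GPCS: it is closed, invariant under a subspace `K`, and
contained in `x₀ + K + U` with `U` finite-dimensional. -/
theorem IsGPCS.structure [IsTopologicalAddGroup X] {D : Set X} (h : IsGPCS D) :
    ∃ (K U : Submodule ℝ X) (x₀ : X), FiniteDimensional ℝ U ∧
      (∀ x ∈ D, ∀ k ∈ K, x + k ∈ D) ∧
      (∀ x ∈ D, ∃ k ∈ K, ∃ u ∈ U, x = x₀ + k + u) := by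
  obtain ⟨p, f, α, x₀, W, hWc, rfl⟩ := h
  let φ : ↥W →ₗ[ℝ] (Fin p → ℝ) :=
    LinearMap.pi fun i => ((f i : X →ₗ[ℝ] ℝ)).comp W.subtype
  obtain ⟨C, hC⟩ := Submodule.exists_isCompl (LinearMap.ker φ)
  haveI hfd1 : FiniteDimensional ℝ (↥W ⧸ LinearMap.ker φ) :=
    Module.Finite.equiv φ.quotKerEquivRange.symm
  haveI hfd2 : FiniteDimensional ℝ C :=
    Module.Finite.equiv (Submodule.quotientEquivOfIsCompl (LinearMap.ker φ) C hC)
  refine ⟨(LinearMap.ker φ).map W.subtype, C.map W.subtype, x₀,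
    Module.Finite.map C W.subtype, ?_, ?_⟩
  · rintro x ⟨hxW, hxf⟩ k hk
    obtain ⟨k', hk', rfl⟩ := Submodule.mem_map.1 hk
    simp only [Submodule.subtype_apply]
    have hkW : (k' : X) ∈ W := k'.2
    have hkf : ∀ i, f i (k' : X) = 0 := by
      intro i
      have := congrFun (LinearMap.mem_ker.1 hk') i
      simpa [φ] using this
    constructor
    · rw [mem_vadd_submodule_iff] at hxW ⊢
      have heq : x + (k' : X) - x₀ = (x - x₀) + (k' : X) := by abel
      rw [heq]
      exact W.add_mem hxW hkW
    · intro i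
      rw [map_add, hkf i, add_zero]
      exact hxf i
  · rintro x ⟨hxW, hxf⟩
    rw [mem_vadd_submodule_iff] at hxW
    have hmem : (⟨x - x₀, hxW⟩ : ↥W) ∈ LinearMap.ker φ ⊔ C := by
      rw [hC.sup_eq_top]
      trivial
    obtain ⟨k', hk', c, hc, hkc⟩ := Submodule.mem_sup.1 hmem
    refine ⟨k', Submodule.mem_map_of_mem hk', c, Submodule.mem_map_of_mem hc, ?_⟩
    have := congrArg (Subtype.val) hkc
    simp only [Submodule.coe_add] at this
    rw [show x = x₀ + (x - x₀) by abel, ← this]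
    abel

/-- The lineality space of a convex set as a submodule. -/
theorem exists_lineality {D : Set X} (hconv : Convex ℝ D) :
    ∃ L : Submodule ℝ X, (L : Set X) = {v | ∀ x ∈ D, x + v ∈ D ∧ x - v ∈ D} := by
  have hscaled : ∀ v : X, (∀ x ∈ D, x + v ∈ D) → ∀ c : ℝ, 0 ≤ c → ∀ x ∈ D, x + c • v ∈ D := by
    intro v hv c hc x hx
    obtain ⟨n, hn⟩ := exists_nat_ge c
    rcases eq_or_lt_of_le (le_trans hc hn) with h0 | hnpos
    · have : c = 0 := le_antisymm (h0 ▸ hn) hc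
      rw [this, zero_smul, add_zero]
      exact hx
    have hxn : ∀ m : ℕ, x + (m : ℝ) • v ∈ D := by
      intro m
      induction m with
      | zero => simpa using hx
      | succ m ih =>
        have := hv _ ih
        have heq : x + (m : ℝ) • v + v = x + ((m:ℝ) + 1) • v := by
          rw [add_smul, one_smul]
          abel
        rw [heq] at this
        push_cast
        exact this
    have hcomb := hconv (a := 1 - c/(n:ℝ)) (b := c/(n:ℝ)) hx (hxn n)
      (by rw [sub_nonneg, div_le_one hnpos]; exact hn)
      (div_nonneg hc hnpos.le) (by ring)
    have heq : (1 - c/(n:ℝ)) • x + (c/(n:ℝ)) • (x + (n:ℝ) • v) = x + c • v := by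
      rw [smul_add, smul_smul, sub_smul, one_smul, div_mul_cancel₀ _ hnpos.ne']
      abel
    rwa [heq] at hcomb
  refine ⟨{ carrier := {v | ∀ x ∈ D, x + v ∈ D ∧ x - v ∈ D}
            add_mem' := ?_
            zero_mem' := ?_
            smul_mem' := ?_ }, rfl⟩
  · intro a b ha hb x hx
    constructor
    · have h2 := (hb _ (ha x hx).1).1
      have heq : x + a + b = x + (a + b) := by abel
      rwa [heq] at h2
    · have h2 := (hb _ (ha x hx).2).2
      have heq : x - a - b = x - (a + b) := by abel
      rwa [heq] at h2
  · intro x hx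
    exact ⟨by simpa using hx, by simpa using hx⟩
  · intro c v hv x hx
    have hplus : ∀ w : X, (∀ x' ∈ D, x' + w ∈ D ∧ x' - w ∈ D) → ∀ c' : ℝ, 0 ≤ c' →
        x + c' • w ∈ D := fun w hw c' hc' =>
      hscaled w (fun x' hx' => (hw x' hx').1) c' hc' x hx
    have hneg : ∀ x' ∈ D, x' + (-v) ∈ D ∧ x' - (-v) ∈ D := by
      intro x' hx'
      constructor
      · have h := (hv x' hx').2
        rwa [sub_eq_add_neg] at h
      · have h := (hv x' hx').1
        rwa [← sub_neg_eq_add] at h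
    rcases le_or_gt 0 c with hc | hc
    · constructor
      · exact hplus v hv c hc
      · have h := hplus (-v) hneg c hc
        rwa [smul_neg, ← sub_eq_add_neg] at h
    · constructor
      · have h := hplus (-v) hneg (-c) (by linarith)
        rwa [neg_smul_neg] at h
      · have h := hplus v hv (-c) (by linarith)
        rwa [neg_smul, ← sub_eq_add_neg] at h

end Struct
/-- A convex set which is a finite union of generalized polyhedral convex sets
is itself a generalized polyhedral convex set. -/
theorem convex_union_isGPCS {X : Type*} [AddCommGroup X] [Module ℝ X] [TopologicalSpace X]
    [IsTopologicalAddGroup X] [ContinuousSMul ℝ X] [LocallyConvexSpace ℝ X] [T2Space X]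
    (m : ℕ) (D : Fin m → Set X) (hD : ∀ i, IsGPCS (D i))
    (D' : Set X) (hconv : Convex ℝ D') (hunion : D' = ⋃ i, D i) :
    IsGPCS D' := by
  classical
  rcases Set.eq_empty_or_nonempty D' with hDe | hDne
  · rw [hDe]; exact isGPCS_empty
  choose K U x₀c hUfd hinv hdec using fun i => (hD i).structure
  have hDiclosed : ∀ i, IsClosed (D i) := fun i => (hD i).isClosed
  have hD'closed : IsClosed D' := by
    rw [hunion]; exact isClosed_iUnion_of_finite hDiclosed
  -- the lineality space
  obtain ⟨L, hLset⟩ := exists_lineality hconv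
  have hLmem : ∀ v : X, v ∈ L ↔ ∀ x ∈ D', x + v ∈ D' ∧ x - v ∈ D' := by
    intro v
    rw [← SetLike.mem_coe, hLset]
    exact Iff.rfl
  have hLclosed : IsClosed (L : Set X) := by
    rw [hLset]
    have heq : {v : X | ∀ x ∈ D', x + v ∈ D' ∧ x - v ∈ D'} =
        ⋂ x ∈ D', (((fun v => x + v) ⁻¹' D') ∩ ((fun v => x - v) ⁻¹' D')) := by
      ext v
      simp only [Set.mem_setOf_eq, Set.mem_iInter, Set.mem_inter_iff, Set.mem_preimage]
    rw [heq]
    exact isClosed_biInter fun x _ =>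
      (hD'closed.preimage (continuous_const.add continuous_id)).inter
        (hD'closed.preimage (continuous_const.sub continuous_id))
  -- each K i is contained in L
  have hKL : ∀ i, (D i).Nonempty → ∀ k ∈ K i, k ∈ L := by
    rintro i ⟨w, hw⟩ k hk
    rw [hLmem]
    intro x hx
    constructor
    · exact mem_of_ray hD'closed hconv hx (fun t ht => by
        rw [hunion]
        exact Set.mem_iUnion.2 ⟨i, hinv i w hw (t • k) ((K i).smul_mem t hk)⟩)
    · rw [sub_eq_add_neg]
      exact mem_of_ray hD'closed hconv hx (fun t ht => by
        rw [hunion]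
        exact Set.mem_iUnion.2 ⟨i, hinv i w hw (t • (-k)) ((K i).smul_mem t ((K i).neg_mem hk))⟩)
  -- a finite-dimensional space catching all the affine/polyhedral parts
  haveI : ∀ i, FiniteDimensional ℝ (U i) := hUfd
  haveI : ∀ i, FiniteDimensional ℝ (Submodule.span ℝ {x₀c i}) := fun i =>
    FiniteDimensional.span_of_finite ℝ (Set.finite_singleton _)
  set V : Submodule ℝ X := ⨆ i, (U i ⊔ Submodule.span ℝ {x₀c i}) with hV
  haveI : FiniteDimensional ℝ V := inferInstance
  have hUleV : ∀ i, U i ≤ V := fun i =>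
    le_trans le_sup_left (le_iSup (fun i => U i ⊔ Submodule.span ℝ {x₀c i}) i)
  have hx₀V : ∀ i, x₀c i ∈ V := fun i =>
    le_trans le_sup_right (le_iSup (fun i => U i ⊔ Submodule.span ℝ {x₀c i}) i)
      (Submodule.mem_span_singleton_self _)
  have hsubLV : ∀ x ∈ D', ∃ l ∈ L, ∃ v ∈ V, x = l + v := by
    intro x hx
    obtain ⟨i, hxi⟩ := Set.mem_iUnion.1 (hunion ▸ hx)
    obtain ⟨k, hk, u, hu, hxe⟩ := hdec i x hxi
    exact ⟨k, hKL i ⟨x, hxi⟩ k hk, x₀c i + u,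
      V.add_mem (hx₀V i) (hUleV i hu), by rw [hxe]; abel⟩
  -- complement of L ∩ V inside V
  obtain ⟨Cc, hCc⟩ := Submodule.exists_isCompl (L.comap V.subtype)
  set V₁ : Submodule ℝ X := Cc.map V.subtype with hV₁
  haveI : FiniteDimensional ℝ V₁ := Module.Finite.map Cc V.subtype
  have hLV₁ : ∀ v ∈ V₁, v ∈ L → v = 0 := by
    intro v hv hvL
    obtain ⟨c, hc, rfl⟩ := Submodule.mem_map.1 hv
    have hc0 : c ∈ L.comap V.subtype := hvL
    have : c = 0 := Submodule.disjoint_def.1 hCc.disjoint c hc0 hc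
    simp [this]
  have hsplit : ∀ x ∈ D', ∃ l ∈ L, ∃ v ∈ V₁, x = l + v := by
    intro x hx
    obtain ⟨l, hl, v, hv, rfl⟩ := hsubLV x hx
    have hmem : (⟨v, hv⟩ : ↥V) ∈ L.comap V.subtype ⊔ Cc := by
      rw [hCc.sup_eq_top]; trivial
    obtain ⟨l₀, hl₀, c, hc, hlc⟩ := Submodule.mem_sup.1 hmem
    have hveq := congrArg (Subtype.val) hlc
    simp only [Submodule.coe_add] at hveq
    refine ⟨l + ↑l₀, L.add_mem hl hl₀, ↑c, Submodule.mem_map_of_mem hc, ?_⟩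
    rw [← hveq]
    abel
  have hDL : ∀ x ∈ D', ∀ l ∈ L, x + l ∈ D' := fun x hx l hl => ((hLmem l).1 hl x hx).1
  have hDLsub : ∀ x ∈ D', ∀ l ∈ L, x - l ∈ D' := fun x hx l hl => ((hLmem l).1 hl x hx).2
  -- Klee's theorem inside V₁
  set Q : Set ↥V₁ := {v : ↥V₁ | (v : X) ∈ D'} with hQ
  have hQunion : Q = ⋃ i, {v : ↥V₁ | (v : X) ∈ D i} := by
    ext v
    simp only [hQ, Set.mem_setOf_eq, Set.mem_iUnion, hunion, Set.mem_iUnion]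
  have hQpoly : IsHPoly Q := by
    rw [hQunion]
    apply klee
    · intro i
      obtain ⟨p, f, α, y₀, W, hWc, hDi⟩ := hD i
      rw [hDi]
      have hsplitset : {v : ↥V₁ | (v:X) ∈ {x ∈ y₀ +ᵥ (W : Set X) | ∀ j, f j x ≤ α j}} =
          {v : ↥V₁ | (v:X) ∈ y₀ +ᵥ (W : Set X)} ∩
          {v : ↥V₁ | ∀ j, (((f j : X →ₗ[ℝ] ℝ)).comp V₁.subtype) v ≤ α j} := by
        ext v
        simp only [Set.mem_setOf_eq, Set.mem_inter_iff, LinearMap.coe_comp,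
          Function.comp_apply, Submodule.subtype_apply, ContinuousLinearMap.coe_coe]
      rw [hsplitset]
      refine IsHPoly.inter ?_ (isHPoly_of_finite _ _)
      rcases Set.eq_empty_or_nonempty {v : ↥V₁ | (v:X) ∈ y₀ +ᵥ (W : Set X)} with he | hne
      · rw [he]; exact isHPoly_empty
      · obtain ⟨v₀, hv₀⟩ := hne
        have hv₀' : (v₀ : X) - y₀ ∈ W := (mem_vadd_submodule_iff _ _ _).1 hv₀
        have haff : {v : ↥V₁ | (v:X) ∈ y₀ +ᵥ (W : Set X)} =
            v₀ +ᵥ ((W.comap V₁.subtype : Submodule ℝ ↥V₁) : Set ↥V₁) := by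
          ext v
          rw [Set.mem_setOf_eq, mem_vadd_submodule_iff, mem_vadd_submodule_iff]
          simp only [Submodule.mem_comap, Submodule.subtype_apply, Submodule.coe_sub]
          constructor
          · intro h
            have heq : (v:X) - (v₀:X) = ((v:X) - y₀) - ((v₀:X) - y₀) := by abel
            rw [heq]
            exact W.sub_mem h hv₀'
          · intro h
            have heq : (v:X) - y₀ = ((v:X) - (v₀:X)) + ((v₀:X) - y₀) := by abel
            rw [heq]
            exact W.add_mem h hv₀'
        rw [haff]
        exact (isHPoly_submodule _).vadd v₀
    · rw [← hQunion]
      have hQpre : Q = (V₁.subtype) ⁻¹' D' := rfl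
      rw [hQpre]
      exact hconv.linear_preimage V₁.subtype
  obtain ⟨r, g, β, hQrep⟩ := hQpoly
  -- extension functionals via Hahn-Banach
  set b := Module.finBasis ℝ ↥V₁ with hb
  have hNs : ∀ s, ∃ φ : X →L[ℝ] ℝ, (∀ x ∈ L, φ x = 0) ∧
      (∀ t, t ≠ s → φ ((b t : ↥V₁) : X) = 0) ∧ φ ((b s : ↥V₁) : X) = 1 := by
    intro s
    set N : Submodule ℝ X := L ⊔ Submodule.span ℝ
      (Set.range fun t : {t // t ≠ s} => ((b t.1 : ↥V₁) : X)) with hN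
    haveI : FiniteDimensional ℝ (Submodule.span ℝ
        (Set.range fun t : {t // t ≠ s} => ((b t.1 : ↥V₁) : X))) :=
      FiniteDimensional.span_of_finite ℝ (Set.finite_range _)
    have hNclosed : IsClosed (N : Set X) := isClosed_sup_fd _ _ hLclosed
    have hspan : Submodule.span ℝ (Set.range fun t : {t // t ≠ s} => ((b t.1 : ↥V₁) : X)) =
        (Submodule.span ℝ (Set.range fun t : {t // t ≠ s} => b t.1)).map V₁.subtype := by
      rw [Submodule.map_span]
      congr 1
      ext x
      simp only [Set.mem_range, Set.mem_image]
      constructor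
      · rintro ⟨t, rfl⟩
        exact ⟨b t.1, ⟨t, rfl⟩, rfl⟩
      · rintro ⟨y, ⟨t, rfl⟩, rfl⟩
        exact ⟨t, rfl⟩
    have heN : ((b s : ↥V₁) : X) ∉ N := by
      intro hmem
      obtain ⟨l, hl, w, hw, hlw⟩ := Submodule.mem_sup.1 hmem
      rw [hspan] at hw
      obtain ⟨w', hw', rfl⟩ := Submodule.mem_map.1 hw
      have hsub : ((b s - w' : ↥V₁) : X) ∈ L := by
        have heq : ((b s : ↥V₁) : X) - (V₁.subtype w') = l := by rw [← hlw]; abel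
        rw [Submodule.coe_sub]
        rw [Submodule.subtype_apply] at heq
        rw [heq]
        exact hl
      have h0 : ((b s - w' : ↥V₁) : X) = 0 := hLV₁ _ (SetLike.coe_mem _) hsub
      have hbw : b s = w' := by
        have h0' : (b s - w' : ↥V₁) = 0 := ZeroMemClass.coe_eq_zero.1 h0
        exact sub_eq_zero.1 h0'
      have hnot : b s ∉ Submodule.span ℝ (b '' {t | t ≠ s}) :=
        b.linearIndependent.notMem_span_image (by simp)
      apply hnot
      rw [hbw]
      have hrange : (Set.range fun t : {t // t ≠ s} => b t.1) = b '' {t | t ≠ s} := by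
        ext y
        simp only [Set.mem_range, Set.mem_image, Set.mem_setOf_eq, Subtype.exists]
        constructor
        · rintro ⟨t, ht, rfl⟩
          exact ⟨t, ht, rfl⟩
        · rintro ⟨t, ht, rfl⟩
          exact ⟨t, ht, rfl⟩
      rw [← hrange]
      exact hw'
    obtain ⟨φ, hφ0, hφ1⟩ := exists_functional_vanishing N hNclosed heN
    refine ⟨φ, fun x hx => hφ0 x (Submodule.mem_sup_left hx), fun t ht => ?_, hφ1⟩
    refine hφ0 _ (Submodule.mem_sup_right (Submodule.subset_span ⟨⟨t, ht⟩, rfl⟩))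
  choose φ hφL hφO hφd using hNs
  -- the extended functionals
  set F : Fin r → (X →L[ℝ] ℝ) := fun k => ∑ s, g k (b s) • φ s with hF
  have hFapp : ∀ k (x : X), F k x = ∑ s, g k (b s) * φ s x := by
    intro k x
    simp [hF, ContinuousLinearMap.sum_apply, ContinuousLinearMap.smul_apply, smul_eq_mul]
  have hFL : ∀ k, ∀ x ∈ L, F k x = 0 := by
    intro k x hx
    rw [hFapp]
    exact Finset.sum_eq_zero fun s _ => by rw [hφL s x hx, mul_zero]
  have hcoev : ∀ v : ↥V₁, (v : X) = ∑ t, b.repr v t • ((b t : ↥V₁) : X) := by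
    intro v
    have h1 := b.sum_repr v
    have h2 := congrArg (V₁.subtype) h1.symm
    simp only [map_sum, map_smul, Submodule.subtype_apply] at h2
    exact h2
  have hφdiag : ∀ s (v : ↥V₁), φ s (v : X) = b.repr v s := by
    intro s v
    rw [hcoev v, map_sum, Finset.sum_eq_single s]
    · rw [map_smul, hφd s, smul_eq_mul, mul_one]
    · intro t _ hts
      rw [map_smul, hφO s t hts, smul_eq_mul, mul_zero]
    · intro hs
      exact absurd (Finset.mem_univ s) hs
  have hFV : ∀ k (v : ↥V₁), F k (v : X) = g k v := by
    intro k v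
    rw [hFapp]
    conv_rhs => rw [← b.sum_repr v]
    rw [map_sum]
    refine Finset.sum_congr rfl fun s _ => ?_
    rw [hφdiag s v, map_smul, smul_eq_mul, mul_comm]
  -- assemble the GPCS certificate
  set Wfin : Submodule ℝ X := L ⊔ V₁ with hWfin
  have hWfinclosed : IsClosed (Wfin : Set X) := isClosed_sup_fd _ _ hLclosed
  have hvadd0 : (0:X) +ᵥ (Wfin : Set X) = (Wfin : Set X) := by
    ext x
    rw [mem_vadd_submodule_iff]
    simp
  refine ⟨r, F, β, 0, Wfin, by rw [hvadd0]; exact hWfinclosed, ?_⟩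
  rw [hvadd0]
  ext x
  simp only [Set.mem_setOf_eq, SetLike.mem_coe]
  constructor
  · intro hx
    obtain ⟨l, hl, v, hv, rfl⟩ := hsplit x hx
    refine ⟨Submodule.add_mem _ (Submodule.mem_sup_left hl) (Submodule.mem_sup_right hv),
      fun k => ?_⟩
    have hvD : v ∈ D' := by
      have h := hDLsub (l + v) hx l hl
      simpa using h
    have hmemQ : (⟨v, hv⟩ : ↥V₁) ∈ Q := hvD
    rw [hQrep] at hmemQ
    have hk := hmemQ k
    rw [map_add, hFL k l hl, zero_add]
    calc F k v = g k ⟨v, hv⟩ := hFV k ⟨v, hv⟩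
      _ ≤ β k := hk
  · rintro ⟨hxW, hxk⟩
    obtain ⟨l, hl, v, hv, rfl⟩ := Submodule.mem_sup.1 hxW
    have hQv : (⟨v, hv⟩ : ↥V₁) ∈ Q := by
      rw [hQrep]
      intro k
      have hk := hxk k
      rw [map_add, hFL k l hl, zero_add] at hk
      calc g k ⟨v, hv⟩ = F k v := (hFV k ⟨v, hv⟩).symm
        _ ≤ β k := hk
    have hvD : v ∈ D' := hQv
    have h := hDL v hvD l hl
    rwa [add_comm] at h
end

section
/- If D ⊆ X is a nonempty generalized polyhedral convex set with 0 ∈ D, then cone(D) = {t·x | t ≥ 0, x ∈ D} is a generalized polyhedral convex cone; in particular, cone(D) is closed. -/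
open Pointwise

/-- If a generalized polyhedral convex set contains the origin, the cone it
generates is a generalized polyhedral convex cone; in particular it is closed. -/
theorem cone_of_gpcs_zero_mem {X : Type*} [AddCommGroup X] [Module ℝ X] [TopologicalSpace X]
    [IsTopologicalAddGroup X] [ContinuousSMul ℝ X] [LocallyConvexSpace ℝ X] [T2Space X]
    (D : Set X) (hD : IsGPCS D) (h0 : (0 : X) ∈ D) :
    IsGPCS {y : X | ∃ t : ℝ, 0 ≤ t ∧ ∃ x ∈ D, y = t • x} ∧
      IsClosed {y : X | ∃ t : ℝ, 0 ≤ t ∧ ∃ x ∈ D, y = t • x} := by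
  classical
  obtain ⟨p, f, α, x₀, W, hWcl, hDeq⟩ := hD
  have h0' := h0
  rw [hDeq] at h0'
  obtain ⟨⟨w, hwW, hw0⟩, hα0⟩ := h0'
  have hα : ∀ i, 0 ≤ α i := fun i => by simpa using hα0 i
  have hx₀ : x₀ ∈ W := by
    have hx : x₀ = -w := eq_neg_of_add_eq_zero_left hw0
    rw [hx]; exact W.neg_mem hwW
  have hset : x₀ +ᵥ (W : Set X) = (W : Set X) := by
    ext z
    constructor
    · rintro ⟨u, hu, rfl⟩
      exact W.add_mem hx₀ hu
    · intro hz
      exact ⟨z - x₀, W.sub_mem hz hx₀, by simp⟩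
  set g : Fin p → (X →L[ℝ] ℝ) := fun i => if α i = 0 then f i else 0 with hg
  have key : {y : X | ∃ t : ℝ, 0 ≤ t ∧ ∃ x ∈ D, y = t • x}
      = {x ∈ (0 : X) +ᵥ (W : Set X) | ∀ i, g i x ≤ (0 : Fin p → ℝ) i} := by
    ext y
    simp only [Set.mem_setOf_eq, zero_vadd, Pi.zero_apply]
    constructor
    · rintro ⟨t, ht, x, hx, rfl⟩
      rw [hDeq] at hx
      obtain ⟨hxW, hxf⟩ := hx
      rw [hset] at hxW
      refine ⟨W.smul_mem t hxW, fun i => ?_⟩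
      by_cases hαi : α i = 0
      · have : g i (t • x) = t * f i x := by simp [hg, hαi]
        rw [this]
        have := hxf i
        rw [hαi] at this
        exact mul_nonpos_of_nonneg_of_nonpos ht this
      · simp [hg, hαi]
    · rintro ⟨hyW, hyg⟩
      set t : ℝ := 1 + ∑ i, max (f i y / α i) 0 with htdef
      have hsum : (0 : ℝ) ≤ ∑ i, max (f i y / α i) 0 :=
        Finset.sum_nonneg fun i _ => le_max_right _ _
      have htpos : 0 < t := by positivity
      have htge : ∀ j, f j y / α j ≤ t := by
        intro j
        have h1 : max (f j y / α j) 0 ≤ ∑ i, max (f i y / α i) 0 :=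
          Finset.single_le_sum (f := fun i => max (f i y / α i) 0) (fun i _ => le_max_right _ _) (Finset.mem_univ j)
        calc f j y / α j ≤ max (f j y / α j) 0 := le_max_left _ _
          _ ≤ ∑ i, max (f i y / α i) 0 := h1
          _ ≤ t := by rw [htdef]; linarith
      refine ⟨t, le_of_lt htpos, t⁻¹ • y, ?_, by
        rw [smul_smul, mul_inv_cancel₀ (ne_of_gt htpos), one_smul]⟩
      rw [hDeq]
      refine ⟨by rw [hset]; exact W.smul_mem _ hyW, fun i => ?_⟩
      rw [map_smul, smul_eq_mul]
      by_cases hαi : α i = 0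
      · have hfi : f i y ≤ 0 := by simpa [hg, hαi] using hyg i
        have : t⁻¹ * f i y ≤ 0 :=
          mul_nonpos_of_nonneg_of_nonpos (le_of_lt (inv_pos.mpr htpos)) hfi
        linarith [hα i]
      · have hαpos : 0 < α i := lt_of_le_of_ne (hα i) (Ne.symm hαi)
        have hle : f i y ≤ t * α i := (div_le_iff₀ hαpos).mp (htge i)
        rw [inv_mul_le_iff₀ htpos]
        linarith
  have hWclosed : IsClosed ((0 : X) +ᵥ (W : Set X)) := by
    rw [zero_vadd]
    rw [hset] at hWcl
    exact hWcl
  constructor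
  · exact ⟨p, g, 0, 0, W, hWclosed, key⟩
  · rw [key]
    have heq : {x ∈ (0 : X) +ᵥ (W : Set X) | ∀ i, g i x ≤ (0 : Fin p → ℝ) i}
        = ((W : Set X)) ∩ ⋂ i, (g i) ⁻¹' Set.Iic 0 := by
      ext x
      simp [Set.mem_iInter]
    rw [heq]
    refine (by rw [zero_vadd] at hWclosed; exact hWclosed : IsClosed (W : Set X)).inter ?_
    exact isClosed_iInter fun i => IsClosed.preimage (g i).continuous isClosed_Iic
end

section
/- If D ⊆ X is a generalized polyhedral convex set and x ∈ D, then the tangent cone T_D(x) equals cone(D − x) (so the cone generated by D − x is already closed) and T_D(x) is a generalized polyhedral convex cone. -/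
open Pointwise

/-- For a generalized polyhedral convex set $D$ and $x ∈ D$, the tangent cone
$T_D(x)$ (the closure of the cone generated by $D - x$) equals
$\mathrm{cone}(D - x)$, which is a generalized polyhedral convex cone. -/
theorem tangentCone_gpcs {X : Type*} [AddCommGroup X] [Module ℝ X] [TopologicalSpace X]
    [IsTopologicalAddGroup X] [ContinuousSMul ℝ X] [LocallyConvexSpace ℝ X] [T2Space X]
    (D : Set X) (hD : IsGPCS D) (x : X) (hx : x ∈ D) :
    closure {y : X | ∃ t : ℝ, 0 ≤ t ∧ ∃ d ∈ D, y = t • (d - x)} =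
        {y : X | ∃ t : ℝ, 0 ≤ t ∧ ∃ d ∈ D, y = t • (d - x)} ∧
      IsGPCS {y : X | ∃ t : ℝ, 0 ≤ t ∧ ∃ d ∈ D, y = t • (d - x)} := by
  classical
  obtain ⟨p, f, α, x₀, W, hWc, hDeq⟩ := hD
  have hxD := hx
  rw [hDeq] at hxD
  obtain ⟨hxA, hxle⟩ := hxD
  obtain ⟨wx, hwx, hwxeq⟩ := hxA
  -- `hwxeq : x₀ +ᵥ wx = x`
  -- Key: the cone equals a closed polyhedral cone
  have key : {y : X | ∃ t : ℝ, 0 ≤ t ∧ ∃ d ∈ D, y = t • (d - x)} =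
      {v : X | v ∈ (W : Set X) ∧ ∀ i, f i x = α i → f i v ≤ 0} := by
    ext v
    constructor
    · rintro ⟨t, ht, d, hd, rfl⟩
      rw [hDeq] at hd
      obtain ⟨⟨wd, hwd, hwdeq⟩, hdle⟩ := hd
      have hdW : d - x ∈ W := by
        have : d - x = wd - wx := by
          rw [← hwdeq, ← hwxeq]; simp only [vadd_eq_add]; abel
        rw [this]; exact W.sub_mem hwd hwx
      refine ⟨W.smul_mem t hdW, fun i hi => ?_⟩
      have h1 : f i (d - x) ≤ 0 := by
        have := hdle i
        simp only [map_sub]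
        linarith [hi]
      calc f i (t • (d - x)) = t * f i (d - x) := by simp
        _ ≤ 0 := mul_nonpos_of_nonneg_of_nonpos ht h1
    · rintro ⟨hvW, hv⟩
      set g : Fin p → ℝ := fun i =>
        if h : 0 < f i v ∧ f i x < α i then (α i - f i x) / f i v else 1 with hg
      have hgpos : ∀ i, 0 < g i := by
        intro i
        rw [hg]
        dsimp only
        split_ifs with hc
        · exact div_pos (by linarith [hc.2]) hc.1
        · norm_num
      set s : ℝ := (insert (1:ℝ) (Finset.univ.image g)).min' (by simp) with hs
      have hs_le1 : s ≤ 1 := Finset.min'_le _ _ (by simp)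
      have hs_le : ∀ i, s ≤ g i := fun i =>
        Finset.min'_le _ _ (by simp)
      have hs_pos : 0 < s := by
        have hmem := Finset.min'_mem (insert (1:ℝ) (Finset.univ.image g)) (by simp)
        rw [← hs] at hmem
        rcases Finset.mem_insert.1 hmem with h | h
        · rw [h]; norm_num
        · obtain ⟨i, -, hi⟩ := Finset.mem_image.1 h
          rw [← hi]; exact hgpos i
      have hdD : x + s • v ∈ D := by
        rw [hDeq]
        refine ⟨⟨wx + s • v, W.add_mem hwx (W.smul_mem s hvW), ?_⟩, fun i => ?_⟩
        · rw [← hwxeq]; simp only [vadd_eq_add]; abel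
        · have heq : f i (x + s • v) = f i x + s * f i v := by simp
          rw [heq]
          rcases le_or_gt (f i v) 0 with hle | hlt
          · have : s * f i v ≤ 0 := mul_nonpos_of_nonneg_of_nonpos hs_pos.le hle
            linarith [hxle i]
          · have hxi : f i x < α i := by
              rcases lt_or_eq_of_le (hxle i) with h | h
              · exact h
              · exact absurd (hv i h) (not_le.2 hlt)
            have hgi : g i = (α i - f i x) / f i v := by
              rw [hg]; dsimp only; rw [dif_pos ⟨hlt, hxi⟩]
            have := hs_le i
            rw [hgi] at this
            have := (le_div_iff₀ hlt).1 this
            linarith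
      exact ⟨s⁻¹, inv_nonneg.2 hs_pos.le, x + s • v, hdD, by
        rw [add_sub_cancel_left, smul_smul, inv_mul_cancel₀ hs_pos.ne', one_smul]⟩
  have hWclosed : IsClosed (W : Set X) := by
    have : IsClosed ((Homeomorph.addLeft x₀) '' (W : Set X)) := by
      have hco : ⇑(Homeomorph.addLeft x₀) = (fun w => x₀ +ᵥ w) := rfl
      rw [hco, Set.image_vadd]; exact hWc
    exact (Homeomorph.addLeft x₀).isClosed_image.1 this
  have hKclosed : IsClosed {v : X | v ∈ (W : Set X) ∧ ∀ i, f i x = α i → f i v ≤ 0} := by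
    have hrw : {v : X | v ∈ (W : Set X) ∧ ∀ i, f i x = α i → f i v ≤ 0} =
        (W : Set X) ∩ ⋂ i, {v : X | f i x = α i → f i v ≤ 0} := by
      ext v; simp [Set.mem_iInter]
    rw [hrw]
    refine hWclosed.inter (isClosed_iInter fun i => ?_)
    by_cases h : f i x = α i
    · have : {v : X | f i x = α i → f i v ≤ 0} = {v : X | f i v ≤ 0} := by
        ext v; simp [h]
      rw [this]
      exact isClosed_le (f i).continuous continuous_const
    · have : {v : X | f i x = α i → f i v ≤ 0} = Set.univ := by
        ext v; simp [h]
      rw [this]; exact isClosed_univ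
  rw [key]
  refine ⟨hKclosed.closure_eq, p, fun i => if f i x = α i then f i else 0,
    fun _ => 0, 0, W, by simpa using hWclosed, ?_⟩
  ext v
  simp only [Set.mem_setOf_eq, Set.mem_sep_iff, zero_vadd, SetLike.mem_coe]
  constructor
  · rintro ⟨h1, h2⟩
    refine ⟨h1, fun i => ?_⟩
    split_ifs with hi
    · exact h2 i hi
    · simp
  · rintro ⟨h1, h2⟩
    refine ⟨h1, fun i hi => ?_⟩
    have := h2 i
    rw [if_pos hi] at this
    exact this
end

section
/- A proper function f : X → ℝ ∪ {±∞} is generalized polyhedral convex if and only if dom f is a generalized polyhedral convex set and there exist continuous linear functionals v₁*,...,v_m* and reals β₁,...,β_m such that f(x) = max{⟨v_k*, x⟩ + β_k | k = 1,...,m} for all x ∈ dom f (and f(x) = +∞ otherwise). -/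
open Pointwise

/-- A proper function is generalized polyhedral convex iff its effective domain
is a generalized polyhedral convex set and it is the maximum of finitely many
continuous affine functions on its domain. -/
theorem isGPCF_iff_max_affine {X : Type*} [AddCommGroup X] [Module ℝ X] [TopologicalSpace X]
    [IsTopologicalAddGroup X] [ContinuousSMul ℝ X] [LocallyConvexSpace ℝ X] [T2Space X]
    (f : X → EReal) (hproper : {x : X | f x ≠ ⊤}.Nonempty ∧ ∀ x, f x ≠ ⊥) :
    IsGPCS {p : X × ℝ | f p.1 ≤ (p.2 : EReal)} ↔
      IsGPCS {x : X | f x ≠ ⊤} ∧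
        ∃ (m : ℕ), 0 < m ∧ ∃ (v : Fin m → (X →L[ℝ] ℝ)) (β : Fin m → ℝ),
          ∀ x, f x ≠ ⊤ → f x = ((⨆ k, (v k x + β k) : ℝ) : EReal) := by
  classical
  obtain ⟨⟨x₁, hx₁⟩, hbot⟩ := hproper
  constructor
  · rintro ⟨p, g, α, z₀, W, hWcl, hS⟩
    set A : Set (X × ℝ) := z₀ +ᵥ (W : Set (X × ℝ)) with hA
    have hmem : ∀ z : X × ℝ, f z.1 ≤ (z.2 : EReal) ↔ z ∈ A ∧ ∀ i, g i z ≤ α i := by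
      intro z
      have : z ∈ {p : X × ℝ | f p.1 ≤ (p.2 : EReal)} ↔
          z ∈ {z ∈ A | ∀ i, g i z ≤ α i} := by rw [← hS]
      simpa using this
    have hAmem : ∀ z : X × ℝ, z ∈ A ↔ z - z₀ ∈ W := by
      intro z
      rw [Set.mem_vadd_set_iff_neg_vadd_mem]
      simp [vadd_eq_add, neg_add_eq_sub, SetLike.mem_coe]
    set r₁ : ℝ := (f x₁).toReal with hr₁def
    have hr₁ : f x₁ = (r₁ : EReal) := (EReal.coe_toReal hx₁ (hbot x₁)).symm
    have h1 : f (x₁, r₁).1 ≤ ((x₁, r₁).2 : EReal) := by simp [hr₁]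
    have h1' : ∀ t : ℝ, r₁ ≤ t → f (x₁, t).1 ≤ ((x₁, t).2 : EReal) := by
      intro t ht
      simp only [hr₁]
      exact_mod_cast ht
    have hup : ((0 : X), (1 : ℝ)) ∈ W := by
      have hm1 := ((hmem _).mp h1).1
      have hm2 := ((hmem _).mp (h1' (r₁ + 1) (by linarith))).1
      have := sub_mem ((hAmem _).mp hm2) ((hAmem _).mp hm1)
      simpa [Prod.ext_iff] using this
    have hAvert : ∀ z ∈ A, ∀ s : ℝ, z + s • ((0 : X), (1 : ℝ)) ∈ A := by
      intro z hz s
      rw [hAmem] at hz ⊢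
      have : z + s • ((0 : X), (1 : ℝ)) - z₀ = (z - z₀) + s • ((0 : X), (1 : ℝ)) := by
        abel
      rw [this]
      exact add_mem hz (W.smul_mem s hup)
    set c : Fin p → ℝ := fun i => g i ((0 : X), (1 : ℝ)) with hc_def
    set h : Fin p → (X →L[ℝ] ℝ) := fun i => (g i).comp (ContinuousLinearMap.inl ℝ X ℝ)
      with hh_def
    have hdecomp : ∀ i (x : X) (t : ℝ), g i (x, t) = h i x + t * c i := by
      intro i x t
      have : (x, t) = ((x, (0 : ℝ)) : X × ℝ) + t • ((0 : X), (1 : ℝ)) := by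
        simp [Prod.ext_iff]
      rw [this, map_add, map_smul]
      simp [hh_def, hc_def, smul_eq_mul]
    have hcle : ∀ i, c i ≤ 0 := by
      intro i
      by_contra hpos
      push_neg at hpos
      set s : ℝ := max 0 ((α i - g i (x₁, r₁) + 1) / c i) with hs_def
      have hs0 : 0 ≤ s := le_max_left _ _
      have hmemi := ((hmem _).mp (h1' (r₁ + s) (by linarith))).2 i
      have heq : g i (x₁, r₁ + s) = g i (x₁, r₁) + s * c i := by
        rw [hdecomp i x₁ (r₁ + s), hdecomp i x₁ r₁]; ring
      have hsge : (α i - g i (x₁, r₁) + 1) / c i ≤ s := le_max_right _ _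
      have : α i - g i (x₁, r₁) + 1 ≤ s * c i := by
        rw [div_le_iff₀ hpos] at hsge; linarith
      rw [heq] at hmemi
      linarith
    -- the x-slice of the affine set
    set W' : Submodule ℝ X := W.comap (ContinuousLinearMap.inl ℝ X ℝ).toLinearMap with hW'
    have hW'mem : ∀ x : X, x ∈ W' ↔ ((x, (0 : ℝ)) : X × ℝ) ∈ W := by
      intro x
      simp [hW', Submodule.mem_comap]
    set x₀ : X := z₀.1 with hx₀
    have hA0 : ∀ (x : X) (t : ℝ), ((x, t) : X × ℝ) ∈ A ↔ ((x, (0 : ℝ)) : X × ℝ) ∈ A := by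
      intro x t
      constructor
      · intro hz
        have := hAvert _ hz (-t)
        simpa [Prod.ext_iff] using this
      · intro hz
        have := hAvert _ hz t
        simpa [Prod.ext_iff] using this
    have hset : x₀ +ᵥ (W' : Set X) = {x : X | ((x, (0 : ℝ)) : X × ℝ) ∈ A} := by
      ext x
      rw [Set.mem_vadd_set_iff_neg_vadd_mem]
      simp only [vadd_eq_add, neg_add_eq_sub, SetLike.mem_coe, Set.mem_setOf_eq]
      rw [hW'mem, hAmem]
      constructor
      · intro hx
        have : ((x, (0 : ℝ)) : X × ℝ) - z₀ = ((x - x₀, (0 : ℝ)) : X × ℝ) +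
            (-z₀.2) • ((0 : X), (1 : ℝ)) := by
          simp [Prod.ext_iff, hx₀]
        rw [this]
        exact add_mem hx (W.smul_mem _ hup)
      · intro hx
        have heq : ((x - x₀, (0 : ℝ)) : X × ℝ) = (((x, (0 : ℝ)) : X × ℝ) - z₀) +
            z₀.2 • ((0 : X), (1 : ℝ)) := by
          simp [Prod.ext_iff, hx₀]
        rw [heq]
        exact add_mem hx (W.smul_mem _ hup)
    have hclosed : IsClosed (x₀ +ᵥ (W' : Set X)) := by
      rw [hset]
      have : {x : X | ((x, (0 : ℝ)) : X × ℝ) ∈ A} = (fun x : X => ((x, (0 : ℝ)) : X × ℝ)) ⁻¹' A :=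
        rfl
      rw [this]
      exact hWcl.preimage (continuous_id.prodMk continuous_const)
    -- description of the domain
    have hdomdesc : ∀ x : X, f x ≠ ⊤ ↔
        (x ∈ x₀ +ᵥ (W' : Set X) ∧ ∀ i, c i = 0 → h i x ≤ α i) := by
      intro x
      constructor
      · intro hx
        have hr : f x = ((f x).toReal : EReal) := (EReal.coe_toReal hx (hbot x)).symm
        have hx' : f ((x, (f x).toReal) : X × ℝ).1 ≤ (((x, (f x).toReal) : X × ℝ).2 : EReal) := by
          simp [← hr]
        obtain ⟨hxA, hxg⟩ := (hmem _).mp hx'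
        constructor
        · rw [hset]
          exact (hA0 x _).mp hxA
        · intro i hi
          have := hxg i
          rw [hdecomp i x _] at this
          rw [hi] at this
          linarith
      · rintro ⟨hxA, hxg⟩
        rw [hset] at hxA
        set s : Finset (Fin p) := Finset.univ.filter (fun i => c i < 0) with hs_def
        set t : ℝ := if hs : s.Nonempty then s.sup' hs (fun i => (α i - h i x) / c i) else 0
          with ht_def
        have hxt : f ((x, t) : X × ℝ).1 ≤ (((x, t) : X × ℝ).2 : EReal) := by
          rw [hmem]
          refine ⟨(hA0 x t).mpr hxA, fun i => ?_⟩
          rw [hdecomp]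
          by_cases hci : c i = 0
          · rw [hci]
            have := hxg i hci
            linarith
          · have hneg : c i < 0 := lt_of_le_of_ne (hcle i) hci
            have his : i ∈ s := by simp [hs_def, hneg]
            have hns : s.Nonempty := ⟨i, his⟩
            have hle : (α i - h i x) / c i ≤ t := by
              rw [ht_def, dif_pos hns]
              exact Finset.le_sup' (f := fun i => (α i - h i x) / c i) his
            rw [div_le_iff_of_neg hneg] at hle
            linarith
        intro htop
        rw [htop] at hxt
        exact absurd hxt (by simp)
    refine ⟨⟨p, fun i => if c i = 0 then h i else 0, fun i => if c i = 0 then α i else 0,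
      x₀, W', hclosed, ?_⟩, ?_⟩
    · ext x
      simp only [Set.mem_setOf_eq, hdomdesc x]
      constructor
      · rintro ⟨hxA, hxg⟩
        refine ⟨hxA, fun i => ?_⟩
        by_cases hci : c i = 0
        · simpa [hci] using hxg i hci
        · simp [hci]
      · rintro ⟨hxA, hxg⟩
        refine ⟨hxA, fun i hci => ?_⟩
        have := hxg i
        simpa [hci] using this
    · -- the max-affine representation
      set s : Finset (Fin p) := Finset.univ.filter (fun i => c i < 0) with hs_def
      have hsne : s.Nonempty := by
        by_contra hse
        rw [Finset.not_nonempty_iff_eq_empty] at hse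
        have hall0 : ∀ i, c i = 0 := by
          intro i
          by_contra hci
          have : i ∈ s := by simp [hs_def, lt_of_le_of_ne (hcle i) hci]
          rw [hse] at this
          exact absurd this (Finset.notMem_empty i)
        -- then (x₁, r₁ - 1) would be in the epigraph
        have hx' : f ((x₁, r₁ - 1) : X × ℝ).1 ≤ (((x₁, r₁ - 1) : X × ℝ).2 : EReal) := by
          rw [hmem]
          obtain ⟨hxA, hxg⟩ := (hmem _).mp h1
          refine ⟨(hA0 x₁ _).mpr ((hA0 x₁ _).mp hxA), fun i => ?_⟩
          have := hxg i
          rw [hdecomp] at this ⊢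
          rw [hall0 i] at this ⊢
          linarith
        simp only [hr₁] at hx'
        rw [EReal.coe_le_coe_iff] at hx'
        linarith
      haveI : Nonempty {i // i ∈ s} := hsne.to_subtype
      set m : ℕ := s.card with hm_def
      have hm0 : 0 < m := Finset.card_pos.mpr hsne
      set e : Fin m → {i // i ∈ s} := fun k => s.equivFin.symm k with he_def
      refine ⟨m, hm0, fun k => (-(c (e k))⁻¹) • h (e k), fun k => α (e k) / c (e k), ?_⟩
      intro x hx
      haveI : Nonempty (Fin m) := ⟨⟨0, hm0⟩⟩
      have hterm : ∀ k, ((-(c (e k))⁻¹) • h (e k)) x + α (e k) / c (e k)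
          = (α (e k) - h (e k) x) / c (e k) := by
        intro k
        have hci : c (e k) < 0 := by
          have h2 := (e k).2
          exact (Finset.mem_filter.mp h2).2
        rw [ContinuousLinearMap.smul_apply, smul_eq_mul]
        field_simp
        ring
      set T : ℝ := ⨆ k, (((-(c (e k))⁻¹) • h (e k)) x + α (e k) / c (e k)) with hT_def
      have hbdd : BddAbove (Set.range fun k => ((-(c (e k))⁻¹) • h (e k)) x + α (e k) / c (e k)) :=
        (Set.finite_range _).bddAbove
      have hr : f x = ((f x).toReal : EReal) := (EReal.coe_toReal hx (hbot x)).symm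
      set r : ℝ := (f x).toReal with hrdef
      have hxr : f ((x, r) : X × ℝ).1 ≤ (((x, r) : X × ℝ).2 : EReal) := by simp [← hr]
      obtain ⟨hxA, hxg⟩ := (hmem _).mp hxr
      have hTle : T ≤ r := by
        refine ciSup_le fun k => ?_
        have hci : c (e k) < 0 := by
          have h2 := (e k).2
          exact (Finset.mem_filter.mp h2).2
        rw [hterm k, div_le_iff_of_neg hci]
        have := hxg (e k)
        rw [hdecomp] at this
        linarith
      have hrle : r ≤ T := by
        have hxT : f ((x, T) : X × ℝ).1 ≤ (((x, T) : X × ℝ).2 : EReal) := by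
          rw [hmem]
          refine ⟨(hA0 x T).mpr ((hA0 x r).mp hxA), fun i => ?_⟩
          rw [hdecomp]
          by_cases hci : c i = 0
          · have := hxg i
            rw [hdecomp, hci] at this
            rw [hci]
            linarith
          · have hneg : c i < 0 := lt_of_le_of_ne (hcle i) hci
            have his : i ∈ s := by simp [hs_def, hneg]
            set k : Fin m := s.equivFin ⟨i, his⟩ with hk_def
            have hek : e k = ⟨i, his⟩ := by simp [he_def, hk_def]
            have hle : ((-(c (e k))⁻¹) • h (e k)) x + α (e k) / c (e k) ≤ T :=
              le_ciSup hbdd k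
            rw [hterm k, hek] at hle
            simp only at hle
            rw [div_le_iff_of_neg hneg] at hle
            linarith
        rw [hr] at hxT
        exact_mod_cast hxT
      rw [hr]
      exact_mod_cast le_antisymm hrle hTle
  · rintro ⟨⟨q, F, a, x₀, W, hWcl, hdom⟩, m, hm, v, β, hrep⟩
    haveI : Nonempty (Fin m) := ⟨⟨0, hm⟩⟩
    have hbdd : ∀ x : X, BddAbove (Set.range fun k => v k x + β k) := fun x =>
      (Set.finite_range _).bddAbove
    refine ⟨q + m,
      Fin.addCases (fun i => (F i).comp (ContinuousLinearMap.fst ℝ X ℝ))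
        (fun k => (v k).comp (ContinuousLinearMap.fst ℝ X ℝ) - ContinuousLinearMap.snd ℝ X ℝ),
      Fin.addCases a (fun k => -β k),
      (x₀, 0), W.prod ⊤, ?_, ?_⟩
    · have heq : ((x₀, (0 : ℝ)) : X × ℝ) +ᵥ ((W.prod ⊤ : Submodule ℝ (X × ℝ)) : Set (X × ℝ))
          = (x₀ +ᵥ (W : Set X)) ×ˢ (Set.univ : Set ℝ) := by
        ext z
        rw [Set.mem_vadd_set_iff_neg_vadd_mem]
        simp [Set.mem_vadd_set_iff_neg_vadd_mem, vadd_eq_add, Submodule.mem_prod,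
          Prod.ext_iff]
      rw [heq]
      exact hWcl.prod isClosed_univ
    · ext z
      obtain ⟨x, t⟩ := z
      have hAmem : ((x, t) : X × ℝ) ∈ ((x₀, (0 : ℝ)) : X × ℝ) +ᵥ
          ((W.prod ⊤ : Submodule ℝ (X × ℝ)) : Set (X × ℝ)) ↔ x ∈ x₀ +ᵥ (W : Set X) := by
        rw [Set.mem_vadd_set_iff_neg_vadd_mem, Set.mem_vadd_set_iff_neg_vadd_mem]
        simp [vadd_eq_add, Submodule.mem_prod]
      simp only [Set.mem_setOf_eq, Set.mem_sep_iff]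
      constructor
      · intro hft
        have hxtop : f x ≠ ⊤ := fun htop => by
          rw [htop] at hft
          exact absurd hft (by simp)
        have hxdom : x ∈ x₀ +ᵥ (W : Set X) ∧ ∀ i, F i x ≤ a i := by
          have : x ∈ {x : X | f x ≠ ⊤} := hxtop
          rw [hdom] at this
          exact this
        have hfx := hrep x hxtop
        rw [hfx] at hft
        rw [EReal.coe_le_coe_iff] at hft
        have hk : ∀ k, v k x + β k ≤ t := fun k =>
          le_trans (le_ciSup (hbdd x) k) hft
        refine ⟨(hAmem).mpr hxdom.1, fun j => ?_⟩
        refine Fin.addCases ?_ ?_ j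
        · intro i
          simpa using hxdom.2 i
        · intro k
          have := hk k
          simp only [Fin.addCases_right]
          simp only [ContinuousLinearMap.coe_sub', Pi.sub_apply,
            ContinuousLinearMap.coe_comp', Function.comp_apply,
            ContinuousLinearMap.coe_fst', ContinuousLinearMap.coe_snd']
          linarith
      · rintro ⟨hzA, hzg⟩
        have hxdom : x ∈ x₀ +ᵥ (W : Set X) ∧ ∀ i, F i x ≤ a i := by
          refine ⟨(hAmem).mp hzA, fun i => ?_⟩
          have := hzg (Fin.castAdd m i)
          simpa using this
        have hxtop : f x ≠ ⊤ := by
          have : x ∈ {x : X | f x ≠ ⊤} := by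
            rw [hdom]
            exact hxdom
          exact this
        rw [hrep x hxtop, EReal.coe_le_coe_iff]
        refine ciSup_le fun k => ?_
        have := hzg (Fin.natAdd q k)
        simp only [Fin.addCases_right, ContinuousLinearMap.coe_sub', Pi.sub_apply,
          ContinuousLinearMap.coe_comp', Function.comp_apply,
          ContinuousLinearMap.coe_fst', ContinuousLinearMap.coe_snd'] at this
        linarith
end

section
/- If f₁, f₂ are proper generalized polyhedral convex functions on X with (dom f₁) ∩ (dom f₂) ≠ ∅, then f₁ + f₂ is a proper generalized polyhedral convex function. -/
open Pointwise

section Aux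
variable {Y : Type*} [AddCommGroup Y] [Module ℝ Y] [TopologicalSpace Y]
variable {Z : Type*} [AddCommGroup Z] [Module ℝ Z] [TopologicalSpace Z]

lemma mem_vadd_coe_iff (x₀ y : Y) (W : Submodule ℝ Y) :
    y ∈ x₀ +ᵥ (W : Set Y) ↔ y - x₀ ∈ W := by
  rw [Set.mem_vadd_set_iff_neg_vadd_mem, vadd_eq_add, SetLike.mem_coe]
  constructor <;> intro h <;> [skip; skip] <;>
    · convert h using 1; abel

lemma isGPCS_of_fintype {ι : Type} [Fintype ι] (f : ι → (Y →L[ℝ] ℝ)) (α : ι → ℝ)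
    (x₀ : Y) (W : Submodule ℝ Y) (hc : IsClosed (x₀ +ᵥ (W : Set Y)))
    {D : Set Y} (hD : D = {x ∈ x₀ +ᵥ (W : Set Y) | ∀ i, f i x ≤ α i}) : IsGPCS D := by
  let e := Fintype.equivFin ι
  refine ⟨Fintype.card ι, f ∘ e.symm, α ∘ e.symm, x₀, W, hc, ?_⟩
  rw [hD]; ext x
  simp only [Set.mem_setOf_eq, Function.comp_apply, and_congr_right_iff]
  exact fun _ => ⟨fun h j => h (e.symm j), fun h i => by simpa using h (e i)⟩

lemma isGPCS_empty_s17 : IsGPCS (∅ : Set Y) := by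
  refine ⟨1, 0, fun _ => -1, 0, ⊤, by simpa using isClosed_univ, ?_⟩
  ext x; simp

lemma isGPCS_vadd [ContinuousAdd Y] {S : Set Y} (h : IsGPCS S) (c : Y) :
    IsGPCS (c +ᵥ S) := by
  obtain ⟨p, f, α, x₀, W, hc, hS⟩ := h
  refine ⟨p, f, fun i => α i + f i c, c + x₀, W, ?_, ?_⟩
  · have : (c + x₀) +ᵥ (W : Set Y) = c +ᵥ (x₀ +ᵥ (W : Set Y)) := by rw [vadd_vadd]
    rw [this]
    exact (Homeomorph.addLeft c).isClosedMap _ hc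
  · ext y
    have hy : y ∈ c +ᵥ S ↔ y - c ∈ S := by
      rw [Set.mem_vadd_set_iff_neg_vadd_mem, vadd_eq_add]
      constructor <;> intro h <;> · convert h using 1; abel
    rw [hy, hS]
    simp only [Set.mem_setOf_eq, mem_vadd_coe_iff, map_sub]
    constructor
    · rintro ⟨h1, h2⟩
      refine ⟨?_, fun i => by have := h2 i; linarith⟩
      convert h1 using 1; abel
    · rintro ⟨h1, h2⟩
      refine ⟨?_, fun i => by have := h2 i; linarith⟩
      convert h1 using 1; abel

lemma isGPCS_preimage (T : Z →L[ℝ] Y) {S : Set Y} (h : IsGPCS S) :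
    IsGPCS (T ⁻¹' S) := by
  obtain ⟨p, f, α, x₀, W, hc, hS⟩ := h
  by_cases hne : (T ⁻¹' (x₀ +ᵥ (W : Set Y))).Nonempty
  · obtain ⟨z₀, hz₀⟩ := hne
    rw [Set.mem_preimage, mem_vadd_coe_iff] at hz₀
    have key : T ⁻¹' (x₀ +ᵥ (W : Set Y)) = z₀ +ᵥ (W.comap T.toLinearMap : Set Z) := by
      ext z
      rw [Set.mem_preimage, mem_vadd_coe_iff, mem_vadd_coe_iff]
      simp only [Submodule.mem_comap, ContinuousLinearMap.coe_coe, map_sub]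
      constructor
      · intro hz
        have := W.sub_mem hz hz₀
        convert this using 1; abel
      · intro hz
        have := W.add_mem hz hz₀
        convert this using 1; abel
    refine ⟨p, fun i => (f i).comp T, α, z₀, W.comap T.toLinearMap, ?_, ?_⟩
    · rw [← key]; exact hc.preimage T.continuous
    · rw [hS]; ext z
      simp only [Set.mem_preimage, Set.mem_setOf_eq, ContinuousLinearMap.comp_apply]
      rw [← key]; rfl
  · have : T ⁻¹' S = ∅ := by
      rw [hS, Set.not_nonempty_iff_eq_empty] at *
      apply Set.eq_empty_of_subset_empty
      intro z hz
      have : z ∈ T ⁻¹' (x₀ +ᵥ (W : Set Y)) := hz.1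
      rw [hne] at this; exact this
    rw [this]; exact isGPCS_empty_s17

lemma isGPCS_inter {S₁ S₂ : Set Y} (h₁ : IsGPCS S₁) (h₂ : IsGPCS S₂) :
    IsGPCS (S₁ ∩ S₂) := by
  obtain ⟨p, f, α, x₀, W, hc, hS⟩ := h₁
  obtain ⟨q, g, β, y₀, V, hc', hS'⟩ := h₂
  by_cases hne : ((x₀ +ᵥ (W : Set Y)) ∩ (y₀ +ᵥ (V : Set Y))).Nonempty
  · obtain ⟨z₀, hz₀W, hz₀V⟩ := hne
    rw [mem_vadd_coe_iff] at hz₀W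
    rw [mem_vadd_coe_iff] at hz₀V
    have key : (x₀ +ᵥ (W : Set Y)) ∩ (y₀ +ᵥ (V : Set Y))
        = z₀ +ᵥ ((W ⊓ V : Submodule ℝ Y) : Set Y) := by
      ext z
      rw [Set.mem_inter_iff, mem_vadd_coe_iff, mem_vadd_coe_iff, mem_vadd_coe_iff,
        Submodule.mem_inf]
      constructor
      · rintro ⟨hzW, hzV⟩
        constructor
        · have := W.sub_mem hzW hz₀W; convert this using 1; abel
        · have := V.sub_mem hzV hz₀V; convert this using 1; abel
      · rintro ⟨hzW, hzV⟩
        constructor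
        · have := W.add_mem hzW hz₀W; convert this using 1; abel
        · have := V.add_mem hzV hz₀V; convert this using 1; abel
    refine isGPCS_of_fintype (ι := Fin p ⊕ Fin q) (Sum.elim f g) (Sum.elim α β) z₀ (W ⊓ V)
      ?_ ?_
    · rw [← key]; exact hc.inter hc'
    · rw [hS, hS']; ext z
      rw [← key]
      simp only [Set.mem_inter_iff, Set.mem_setOf_eq]
      constructor
      · rintro ⟨⟨hz1, hz2⟩, hz3, hz4⟩
        refine ⟨⟨hz1, hz3⟩, ?_⟩
        rintro (i|i)
        · exact hz2 i
        · exact hz4 i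
      · rintro ⟨⟨hz1, hz3⟩, h⟩
        exact ⟨⟨hz1, fun i => h (Sum.inl i)⟩, hz3, fun i => h (Sum.inr i)⟩
  · have : S₁ ∩ S₂ = ∅ := by
      rw [Set.not_nonempty_iff_eq_empty] at hne
      apply Set.eq_empty_of_subset_empty
      rintro z ⟨hz1, hz2⟩
      rw [hS] at hz1; rw [hS'] at hz2
      have : z ∈ (x₀ +ᵥ (W : Set Y)) ∩ (y₀ +ᵥ (V : Set Y)) := ⟨hz1.1, hz2.1⟩
      rw [hne] at this; exact this
    rw [this]; exact isGPCS_empty_s17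

end Aux

lemma fourier_motzkin {p : ℕ} (a c γ : Fin p → ℝ) :
    (∃ s : ℝ, ∀ i, a i + s * c i ≤ γ i) ↔
      ((∀ i, c i = 0 → a i ≤ γ i) ∧
        ∀ i j, 0 < c i → c j < 0 → c i * a j - c j * a i ≤ c i * γ j - c j * γ i) := by
  constructor
  · rintro ⟨s, hs⟩
    refine ⟨fun i hi => by have := hs i; rw [hi] at this; linarith, ?_⟩
    intro i j hi hj
    have h1 := hs i
    have h2 := hs j
    nlinarith [mul_le_mul_of_nonneg_left h2 hi.le, mul_le_mul_of_nonpos_left h1 hj.le]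
  · rintro ⟨h0, hpair⟩
    classical
    set U : Finset (Fin p) := Finset.univ.filter (fun i => 0 < c i) with hU
    set L : Finset (Fin p) := Finset.univ.filter (fun i => c i < 0) with hL
    by_cases hUne : U.Nonempty
    · set img := U.image (fun i => (γ i - a i) / c i) with himg
      have himgne : img.Nonempty := hUne.image _
      set s := img.min' himgne with hsdef
      obtain ⟨i₀, hi₀U, hi₀⟩ : ∃ i₀ ∈ U, (γ i₀ - a i₀) / c i₀ = s := by
        obtain ⟨x, hx, hxe⟩ := Finset.mem_image.mp (img.min'_mem himgne)
        exact ⟨x, hx, hxe⟩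
      have hi₀pos : 0 < c i₀ := (Finset.mem_filter.mp hi₀U).2
      refine ⟨s, fun i => ?_⟩
      rcases lt_trichotomy (c i) 0 with hci | hci | hci
      · -- lower bound index: use pairing with i₀
        have hp := hpair i₀ i hi₀pos hci
        rw [← hi₀]
        rw [div_mul_eq_mul_div, ← sub_nonneg]
        have : γ i - (a i + (γ i₀ - a i₀) * c i / c i₀)
            = ((c i₀ * γ i - c i * γ i₀) - (c i₀ * a i - c i * a i₀)) / c i₀ := by
          field_simp; ring
        rw [this]
        apply div_nonneg _ hi₀pos.le
        have := hpair i₀ i hi₀pos hci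
        linarith
      · rw [hci]; simpa using h0 i hci
      · have hiU : i ∈ U := Finset.mem_filter.mpr ⟨Finset.mem_univ _, hci⟩
        have : s ≤ (γ i - a i) / c i :=
          img.min'_le _ (Finset.mem_image_of_mem _ hiU)
        rw [le_div_iff₀ hci] at this
        linarith
    · by_cases hLne : L.Nonempty
      · set img := L.image (fun i => (γ i - a i) / c i) with himg
        have himgne : img.Nonempty := hLne.image _
        set s := img.max' himgne with hsdef
        refine ⟨s, fun i => ?_⟩
        rcases lt_trichotomy (c i) 0 with hci | hci | hci
        · have hiL : i ∈ L := Finset.mem_filter.mpr ⟨Finset.mem_univ _, hci⟩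
          have : (γ i - a i) / c i ≤ s :=
            img.le_max' _ (Finset.mem_image_of_mem _ hiL)
          rw [div_le_iff_of_neg hci] at this
          linarith
        · rw [hci]; simpa using h0 i hci
        · exact absurd (Finset.mem_filter.mpr ⟨Finset.mem_univ _, hci⟩ : i ∈ U)
            (fun h => hUne ⟨i, h⟩)
      · refine ⟨0, fun i => ?_⟩
        have hci : c i = 0 := by
          rcases lt_trichotomy (c i) 0 with h | h | h
          · exact absurd (Finset.mem_filter.mpr ⟨Finset.mem_univ _, h⟩ : i ∈ L)
              (fun hh => hLne ⟨i, hh⟩)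
          · exact h
          · exact absurd (Finset.mem_filter.mpr ⟨Finset.mem_univ _, h⟩ : i ∈ U)
              (fun hh => hUne ⟨i, hh⟩)
        rw [hci]; simpa using h0 i hci
section Key
variable {Y : Type*} [AddCommGroup Y] [Module ℝ Y] [TopologicalSpace Y]
  [IsTopologicalAddGroup Y] [ContinuousSMul ℝ Y] [LocallyConvexSpace ℝ Y] [T2Space Y]
variable {Z : Type*} [AddCommGroup Z] [Module ℝ Z] [TopologicalSpace Z]

/-- A continuous linear functional vanishing on a closed subspace not containing `e`,
normalized so that it is `1` at `e`. -/
lemma exists_functional_of_not_mem {W : Submodule ℝ Y} (hW : IsClosed (W : Set Y))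
    {e : Y} (he : e ∉ W) :
    ∃ l : Y →L[ℝ] ℝ, l e = 1 ∧ ∀ w ∈ W, l w = 0 := by
  obtain ⟨f, u, hfW, hfe⟩ := geometric_hahn_banach_closed_point W.convex hW he
  have hu : 0 < u := by simpa using hfW 0 W.zero_mem
  have hWz : ∀ w ∈ W, f w = 0 := by
    intro w hw
    by_contra hne
    have : ∀ t : ℝ, t * f w < u := fun t => by
      have := hfW (t • w) (W.smul_mem t hw)
      simpa using this
    rcases lt_trichotomy (f w) 0 with h | h | h
    · have := this ((u + 1) / f w)
      rw [div_mul_cancel₀ _ (ne_of_lt h)] at this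
      linarith
    · exact hne h
    · have := this ((u + 1) / f w)
      rw [div_mul_cancel₀ _ (ne_of_gt h)] at this
      linarith
  have hfe0 : f e ≠ 0 := (hu.trans hfe).ne'
  refine ⟨(f e)⁻¹ • f, by simp [inv_mul_cancel₀ hfe0], fun w hw => by simp [hWz w hw]⟩

lemma isGPCS_exists_smul {S : Set Y} (h : IsGPCS S) (j : Z →L[ℝ] Y) (e : Y) :
    IsGPCS {z : Z | ∃ s : ℝ, j z + s • e ∈ S} := by
  obtain ⟨p, f, α, x₀, W, hc, hS⟩ := h
  by_cases he : e ∈ W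
  · -- Fourier–Motzkin case
    classical
    set c : Fin p → ℝ := fun i => f i e with hcdef
    -- the affine condition is independent of s
    have hmem : ∀ (z : Z) (s : ℝ), j z + s • e ∈ x₀ +ᵥ (W : Set Y) ↔ j z ∈ x₀ +ᵥ (W : Set Y) := by
      intro z s
      rw [mem_vadd_coe_iff, mem_vadd_coe_iff]
      constructor
      · intro hz
        have := W.sub_mem hz (W.smul_mem s he)
        convert this using 1; abel
      · intro hz
        have := W.add_mem hz (W.smul_mem s he)
        convert this using 1; abel
    have hMg : IsGPCS ((j ⁻¹' (x₀ +ᵥ (W : Set Y))) : Set Z) := by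
      apply isGPCS_preimage
      exact ⟨0, Fin.elim0, Fin.elim0, x₀, W, hc, by ext x; simp⟩
    -- the constraint part via Fourier–Motzkin
    set F : (Fin p ⊕ Fin p × Fin p) → (Z →L[ℝ] ℝ) := fun idx =>
      match idx with
      | Sum.inl i => if c i = 0 then (f i).comp j else 0
      | Sum.inr (i, i') => if 0 < c i ∧ c i' < 0 then
          (c i) • ((f i').comp j) - (c i') • ((f i).comp j) else 0
      with hFdef
    set β : (Fin p ⊕ Fin p × Fin p) → ℝ := fun idx =>
      match idx with
      | Sum.inl i => if c i = 0 then α i else 0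
      | Sum.inr (i, i') => if 0 < c i ∧ c i' < 0 then c i * α i' - c i' * α i else 0
      with hβdef
    have hBg : IsGPCS {z : Z | ∀ idx, F idx z ≤ β idx} := by
      refine isGPCS_of_fintype F β 0 ⊤ ?_ ?_
      · have : (0 : Z) +ᵥ ((⊤ : Submodule ℝ Z) : Set Z) = Set.univ := by
          ext z; rw [mem_vadd_coe_iff]; simp
        rw [this]; exact isClosed_univ
      · ext z
        have : z ∈ (0 : Z) +ᵥ ((⊤ : Submodule ℝ Z) : Set Z) := by
          rw [mem_vadd_coe_iff]; simp
        simp [this]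
    have := isGPCS_inter hMg hBg
    convert this using 1
    ext z
    simp only [Set.mem_setOf_eq, Set.mem_inter_iff, Set.mem_preimage]
    constructor
    · rintro ⟨s, hs⟩
      rw [hS] at hs
      obtain ⟨hs1, hs2⟩ := hs
      have hjz : j z ∈ x₀ +ᵥ (W : Set Y) := (hmem z s).mp hs1
      refine ⟨hjz, ?_⟩
      have hfm : ∃ s : ℝ, ∀ i, f i (j z) + s * c i ≤ α i := by
        refine ⟨s, fun i => ?_⟩
        have := hs2 i
        simpa [mul_comm] using this
      rw [fourier_motzkin] at hfm
      obtain ⟨h0, hpair⟩ := hfm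
      rintro (i | ⟨i, i'⟩)
      · by_cases hci : c i = 0
        · simp only [hFdef, hβdef, hci, if_pos rfl]
          simpa using h0 i hci
        · simp [hFdef, hβdef, hci]
      · by_cases hcii : 0 < c i ∧ c i' < 0
        · have := hpair i i' hcii.1 hcii.2
          simp only [hFdef, hβdef, if_pos hcii]
          simp only [ContinuousLinearMap.sub_apply, ContinuousLinearMap.smul_apply,
            ContinuousLinearMap.comp_apply, smul_eq_mul]
          linarith
        · simp [hFdef, hβdef, hcii]
    · rintro ⟨hjz, hcons⟩
      have hfm : ∃ s : ℝ, ∀ i, f i (j z) + s * c i ≤ α i := by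
        rw [fourier_motzkin]
        constructor
        · intro i hci
          have := hcons (Sum.inl i)
          simpa [hFdef, hβdef, hci] using this
        · intro i i' hi hi'
          have := hcons (Sum.inr (i, i'))
          have hcond : 0 < c i ∧ c i' < 0 := ⟨hi, hi'⟩
          simp only [hFdef, hβdef, if_pos hcond] at this
          simp only [ContinuousLinearMap.sub_apply, ContinuousLinearMap.smul_apply,
            ContinuousLinearMap.comp_apply, smul_eq_mul] at this
          linarith
      obtain ⟨s, hs⟩ := hfm
      refine ⟨s, ?_⟩
      rw [hS]
      refine ⟨(hmem z s).mpr hjz, fun i => ?_⟩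
      have := hs i
      simpa [mul_comm] using this
  · -- unique-fiber case, via Hahn–Banach
    have hWclosed : IsClosed (W : Set Y) := by
      have : (W : Set Y) = (-x₀) +ᵥ (x₀ +ᵥ (W : Set Y)) := by
        rw [vadd_vadd]; simp
      rw [this]
      exact (Homeomorph.addLeft (-x₀)).isClosedMap _ hc
    obtain ⟨l, hle, hlW⟩ := exists_functional_of_not_mem hWclosed he
    set B : Z →L[ℝ] Y := j - (l.comp j).smulRight e with hBdef
    set c₀ : Y := (l x₀) • e with hc₀def
    have hkey : {z : Z | ∃ s : ℝ, j z + s • e ∈ S} = B ⁻¹' ((-c₀) +ᵥ S) := by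
      ext z
      simp only [Set.mem_setOf_eq, Set.mem_preimage, Set.mem_vadd_set_iff_neg_vadd_mem,
        neg_neg, vadd_eq_add]
      have hBz : c₀ + B z = j z + (l x₀ - l (j z)) • e := by
        simp only [hBdef, hc₀def, ContinuousLinearMap.sub_apply,
          ContinuousLinearMap.smulRight_apply, ContinuousLinearMap.comp_apply, sub_smul]
        abel
      constructor
      · rintro ⟨s, hs⟩
        have hsval : s = l x₀ - l (j z) := by
          have hmem : j z + s • e ∈ x₀ +ᵥ (W : Set Y) := by rw [hS] at hs; exact hs.1
          rw [mem_vadd_coe_iff] at hmem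
          have := hlW _ hmem
          simp only [map_sub, map_add, map_smul, hle, smul_eq_mul, mul_one] at this
          linarith
        rw [hBz, ← hsval]; exact hs
      · intro hz
        exact ⟨l x₀ - l (j z), by rw [← hBz]; exact hz⟩
    rw [hkey]
    exact isGPCS_preimage B (isGPCS_vadd ⟨p, f, α, x₀, W, hc, hS⟩ (-c₀))

end Key

section EREAL
lemma ereal_sum_le_iff {a b : EReal} (ha : a ≠ ⊥) (hb : b ≠ ⊥) (t : ℝ) :
    a + b ≤ (t : EReal) ↔ ∃ s : ℝ, a ≤ (s : EReal) ∧ b ≤ ((t - s : ℝ) : EReal) := by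
  constructor
  · intro h
    have haT : a ≠ ⊤ := by
      rintro rfl
      rw [EReal.top_add_of_ne_bot hb] at h
      exact absurd h (by simp)
    have hbT : b ≠ ⊤ := by
      rintro rfl
      rw [add_comm, EReal.top_add_of_ne_bot ha] at h
      exact absurd h (by simp)
    refine ⟨a.toReal, by rw [EReal.coe_toReal haT ha], ?_⟩
    have hab : (↑(a.toReal + b.toReal) : EReal) ≤ (t : EReal) := by
      rw [EReal.coe_add, EReal.coe_toReal haT ha, EReal.coe_toReal hbT hb]
      exact h
    rw [EReal.coe_le_coe_iff] at hab
    calc b = (b.toReal : EReal) := (EReal.coe_toReal hbT hb).symm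
    _ ≤ ((t - a.toReal : ℝ) : EReal) := by rw [EReal.coe_le_coe_iff]; linarith
  · rintro ⟨s, h1, h2⟩
    calc a + b ≤ ((s : EReal)) + ((t - s : ℝ) : EReal) := add_le_add h1 h2
    _ = (t : EReal) := by rw [← EReal.coe_add]; norm_num
end EREAL

/-- The sum of two proper generalized polyhedral convex functions with
intersecting domains is a proper generalized polyhedral convex function. -/
theorem add_isGPCF {X : Type*} [AddCommGroup X] [Module ℝ X] [TopologicalSpace X]
    [IsTopologicalAddGroup X] [ContinuousSMul ℝ X] [LocallyConvexSpace ℝ X] [T2Space X]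
    (f₁ f₂ : X → EReal)
    (hp₁ : {x : X | f₁ x ≠ ⊤}.Nonempty ∧ ∀ x, f₁ x ≠ ⊥)
    (hp₂ : {x : X | f₂ x ≠ ⊤}.Nonempty ∧ ∀ x, f₂ x ≠ ⊥)
    (hg₁ : IsGPCS {p : X × ℝ | f₁ p.1 ≤ (p.2 : EReal)})
    (hg₂ : IsGPCS {p : X × ℝ | f₂ p.1 ≤ (p.2 : EReal)})
    (hdom : ({x : X | f₁ x ≠ ⊤} ∩ {x : X | f₂ x ≠ ⊤}).Nonempty) :
    ({x : X | f₁ x + f₂ x ≠ ⊤}.Nonempty ∧ ∀ x, f₁ x + f₂ x ≠ ⊥) ∧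
      IsGPCS {p : X × ℝ | f₁ p.1 + f₂ p.1 ≤ (p.2 : EReal)} := by
  constructor
  · constructor
    · obtain ⟨x, hx1, hx2⟩ := hdom
      refine ⟨x, ?_⟩
      simp only [Set.mem_setOf_eq]
      rw [← EReal.coe_toReal hx1 (hp₁.2 x), ← EReal.coe_toReal hx2 (hp₂.2 x),
        ← EReal.coe_add]
      exact EReal.coe_ne_top _
    · intro x
      rw [ne_eq, EReal.add_eq_bot_iff]
      push_neg
      exact ⟨hp₁.2 x, hp₂.2 x⟩
  · set E₁ := {p : X × ℝ | f₁ p.1 ≤ (p.2 : EReal)} with hE₁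
    set E₂ := {p : X × ℝ | f₂ p.1 ≤ (p.2 : EReal)} with hE₂
    set π₁ : (X × ℝ × ℝ) →L[ℝ] (X × ℝ) :=
      (ContinuousLinearMap.fst ℝ X (ℝ × ℝ)).prod
        ((ContinuousLinearMap.fst ℝ ℝ ℝ).comp (ContinuousLinearMap.snd ℝ X (ℝ × ℝ))) with hπ₁
    set π₂ : (X × ℝ × ℝ) →L[ℝ] (X × ℝ) :=
      (ContinuousLinearMap.fst ℝ X (ℝ × ℝ)).prod
        ((ContinuousLinearMap.snd ℝ ℝ ℝ).comp (ContinuousLinearMap.snd ℝ X (ℝ × ℝ))) with hπ₂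
    set j : (X × ℝ) →L[ℝ] (X × ℝ × ℝ) :=
      (ContinuousLinearMap.fst ℝ X ℝ).prod
        ((0 : (X × ℝ) →L[ℝ] ℝ).prod (ContinuousLinearMap.snd ℝ X ℝ)) with hj
    set e : X × ℝ × ℝ := (0, 1, -1) with he
    have hS : IsGPCS (π₁ ⁻¹' E₁ ∩ π₂ ⁻¹' E₂) :=
      isGPCS_inter (isGPCS_preimage π₁ hg₁) (isGPCS_preimage π₂ hg₂)
    have hkey := isGPCS_exists_smul hS j e
    have hset : {p : X × ℝ | f₁ p.1 + f₂ p.1 ≤ (p.2 : EReal)}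
        = {z : X × ℝ | ∃ s : ℝ, j z + s • e ∈ (π₁ ⁻¹' E₁ ∩ π₂ ⁻¹' E₂)} := by
      ext ⟨x, t⟩
      simp only [Set.mem_setOf_eq, Set.mem_inter_iff, Set.mem_preimage]
      have hje : ∀ s : ℝ, j (x, t) + s • e = (x, (s, t - s)) := by
        intro s
        show (x + s • (0 : X), ((0 : ℝ) + s • (1 : ℝ), t + s • (-1 : ℝ))) = (x, (s, t - s))
        rw [Prod.ext_iff, Prod.ext_iff]
        norm_num [smul_eq_mul]
        ring
      rw [ereal_sum_le_iff (hp₁.2 x) (hp₂.2 x) t]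
      refine exists_congr fun s => ?_
      rw [hje s]
      simp only [hE₁, hE₂, hπ₁, hπ₂, Set.mem_setOf_eq, ContinuousLinearMap.prod_apply,
        ContinuousLinearMap.coe_fst', ContinuousLinearMap.coe_snd',
        ContinuousLinearMap.comp_apply]
    rw [hset]
    exact hkey
end

section
/- If D ⊆ X is the generalized polyhedral convex set {x | Ax = y, ⟨xᵢ*, x⟩ ≤ αᵢ, i = 1,...,p} and x ∈ D, then the normal cone satisfies N_D(x) = cone{xᵢ* | i ∈ I(x)} + (ker A)^⊥, where I(x) = {i | ⟨xᵢ*, x⟩ = αᵢ} and (ker A)^⊥ = {x* ∈ X* | ⟨x*, u⟩ = 0 for all u ∈ ker A}. -/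
open Pointwise

theorem farkas_aux (V : Type*) [AddCommGroup V] [Module ℝ V] :
    ∀ (p : ℕ) (f : Fin p → V →ₗ[ℝ] ℝ) (g : V →ₗ[ℝ] ℝ),
      (∀ v, (∀ i, f i v ≤ 0) → g v ≤ 0) →
      ∃ lam : Fin p → ℝ, (∀ i, 0 ≤ lam i) ∧ g = ∑ i, lam i • f i := by
  intro p
  induction p with
  | zero =>
    intro f g h
    refine ⟨0, fun i => le_rfl, ?_⟩
    have h0 : ∀ v, g v = 0 := by
      intro v
      have h1 := h v (fun i => i.elim0)
      have h2 := h (-v) (fun i => i.elim0)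
      simp only [map_neg] at h2
      linarith
    ext v
    simp [h0 v]
  | succ p ih =>
    intro f g h
    by_cases hc : ∀ v, (∀ i : Fin p, f i.castSucc v ≤ 0) → g v ≤ 0
    · obtain ⟨lam, hlam, hg⟩ := ih (fun i => f i.castSucc) g hc
      refine ⟨Fin.snoc lam 0, ?_, ?_⟩
      · intro i
        refine Fin.lastCases ?_ ?_ i
        · simp
        · intro j; simpa using hlam j
      · rw [hg, Fin.sum_univ_castSucc]
        simp
    · push_neg at hc
      obtain ⟨w₀, hw₀, hgw₀⟩ := hc
      have hfp : 0 < f (Fin.last p) w₀ := by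
        by_contra hle
        push_neg at hle
        have := h w₀ (fun i => Fin.lastCases hle hw₀ i)
        linarith
      set w : V := (f (Fin.last p) w₀)⁻¹ • w₀ with hw
      have hfw : f (Fin.last p) w = 1 := by
        simp [hw, map_smul, smul_eq_mul, inv_mul_cancel₀ (ne_of_gt hfp)]
      have hiw : ∀ i : Fin p, f i.castSucc w ≤ 0 := by
        intro i
        simp only [hw, map_smul, smul_eq_mul]
        exact mul_nonpos_of_nonneg_of_nonpos (le_of_lt (inv_pos.mpr hfp)) (hw₀ i)
      have hgw : 0 < g w := by
        simp only [hw, map_smul, smul_eq_mul]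
        exact mul_pos (inv_pos.mpr hfp) hgw₀
      set F : Fin p → V →ₗ[ℝ] ℝ :=
        fun i => f i.castSucc - (f i.castSucc w) • f (Fin.last p) with hF
      set G : V →ₗ[ℝ] ℝ := g - (g w) • f (Fin.last p) with hG
      have key : ∀ v, (∀ i, F i v ≤ 0) → G v ≤ 0 := by
        intro v hv
        have hmem := h (v - (f (Fin.last p) v) • w) ?_
        · simp only [hG, LinearMap.sub_apply, LinearMap.smul_apply, smul_eq_mul]
          simp only [map_sub, map_smul, smul_eq_mul, hfw, mul_one] at hmem
          linarith
        · intro i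
          refine Fin.lastCases ?_ ?_ i
          · simp [map_sub, map_smul, hfw, smul_eq_mul]
          · intro j
            have := hv j
            simp only [hF, LinearMap.sub_apply, LinearMap.smul_apply, smul_eq_mul] at this
            simp only [map_sub, map_smul, smul_eq_mul]
            linarith
      obtain ⟨mu, hmu, hGeq⟩ := ih F G key
      refine ⟨Fin.snoc mu (g w - ∑ i, mu i * f i.castSucc w), ?_, ?_⟩
      · intro i
        refine Fin.lastCases ?_ ?_ i
        · simp only [Fin.snoc_last]
          have : ∑ i, mu i * f i.castSucc w ≤ 0 :=
            Finset.sum_nonpos fun i _ => mul_nonpos_of_nonneg_of_nonpos (hmu i) (hiw i)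
          linarith
        · intro j; simpa using hmu j
      · ext v
        have hGv := congrFun (congrArg (fun (h : V →ₗ[ℝ] ℝ) => (h : V → ℝ)) hGeq) v
        simp only [hG, LinearMap.sub_apply, LinearMap.smul_apply, smul_eq_mul,
          LinearMap.coe_sum, Finset.sum_apply, hF] at hGv
        rw [Fin.sum_univ_castSucc]
        simp only [LinearMap.add_apply, LinearMap.coe_sum, Finset.sum_apply,
          LinearMap.smul_apply, smul_eq_mul, Fin.snoc_castSucc, Fin.snoc_last]
        have hsum : ∑ i, mu i * (f i.castSucc v - f i.castSucc w * f (Fin.last p) v)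
            = ∑ i, mu i * f i.castSucc v - (∑ i, mu i * f i.castSucc w) * f (Fin.last p) v := by
          rw [Finset.sum_mul, ← Finset.sum_sub_distrib]
          congr 1; ext i; ring
        rw [hsum] at hGv
        ring_nf
        ring_nf at hGv
        linarith

/-- Formula for the normal cone to a generalized polyhedral convex set. -/
theorem normalCone_gpcs {X : Type*} [AddCommGroup X] [Module ℝ X] [TopologicalSpace X]
    [IsTopologicalAddGroup X] [ContinuousSMul ℝ X] [LocallyConvexSpace ℝ X] [T2Space X] {Y : Type*} [AddCommGroup Y] [Module ℝ Y] [TopologicalSpace Y]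
    [IsTopologicalAddGroup Y] [ContinuousSMul ℝ Y] [LocallyConvexSpace ℝ Y] [T2Space Y]
    (A : X →L[ℝ] Y) (hA : Function.Surjective A) (y : Y)
    (p : ℕ) (f : Fin p → (X →L[ℝ] ℝ)) (α : Fin p → ℝ)
    (D : Set X) (hD : D = {x : X | A x = y ∧ ∀ i, f i x ≤ α i})
    (x : X) (hx : x ∈ D) :
    {g : X →L[ℝ] ℝ | ∀ u ∈ D, g (u - x) ≤ 0} =
      {g : X →L[ℝ] ℝ | ∃ lam : Fin p → ℝ, (∀ i, 0 ≤ lam i) ∧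
          (∀ i, f i x ≠ α i → lam i = 0) ∧ g = ∑ i, lam i • f i} +
        {g : X →L[ℝ] ℝ | ∀ u : X, A u = 0 → g u = 0} := by
  subst hD
  obtain ⟨hxA, hxf⟩ := hx
  ext g
  simp only [Set.mem_setOf_eq, Set.mem_add]
  constructor
  · intro hg
    set K := LinearMap.ker (A : X →ₗ[ℝ] Y) with hK
    set F : Fin p → K →ₗ[ℝ] ℝ := fun i =>
      if f i x = α i then ((f i : X →ₗ[ℝ] ℝ)).comp K.subtype else 0 with hFdef
    set G : K →ₗ[ℝ] ℝ := ((g : X →ₗ[ℝ] ℝ)).comp K.subtype with hGdef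
    have key : ∀ v : K, (∀ i, F i v ≤ 0) → G v ≤ 0 := by
      intro v hv
      have hAv : A (v : X) = 0 := v.2
      have hev : ∀ i : Fin p, ∀ᶠ t in nhdsWithin (0:ℝ) (Set.Ioi 0),
          f i (x + t • (v : X)) ≤ α i := by
        intro i
        by_cases hi : f i x = α i
        · have hfiv : f i (v : X) ≤ 0 := by
            have h1 := hv i
            simpa [hFdef, hi] using h1
          filter_upwards [self_mem_nhdsWithin] with t ht
          have htpos : (0:ℝ) < t := ht
          simp only [map_add, map_smul, smul_eq_mul]
          nlinarith
        · have hlt : f i x < α i := lt_of_le_of_ne (hxf i) hi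
          have hcont : Filter.Tendsto (fun t : ℝ => f i (x + t • (v : X)))
              (nhdsWithin (0:ℝ) (Set.Ioi 0)) (nhds (f i x)) := by
            have h1 : Filter.Tendsto (fun t : ℝ => f i x + t * f i (v : X))
                (nhds 0) (nhds (f i x + 0 * f i (v : X))) :=
              tendsto_const_nhds.add (Filter.tendsto_id.mul tendsto_const_nhds)
            simp only [zero_mul, add_zero] at h1
            have h2 := h1.mono_left (nhdsWithin_le_nhds (s := Set.Ioi 0))
            convert h2 using 1
            ext t
            simp [map_add, map_smul, smul_eq_mul]
          exact (hcont.eventually_lt_const hlt).mono fun t h => h.le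
      have hall := (Filter.eventually_all.2 hev).and self_mem_nhdsWithin
      obtain ⟨t, ht, htpos⟩ := hall.exists
      have htpos' : (0:ℝ) < t := htpos
      have hmem : x + t • (v : X) ∈ {x : X | A x = y ∧ ∀ i, f i x ≤ α i} := by
        refine ⟨?_, ht⟩
        simp [map_add, map_smul, hAv, hxA]
      have h1 := hg _ hmem
      simp only [add_sub_cancel_left, map_smul, smul_eq_mul] at h1
      have h2 : g (v : X) ≤ 0 := nonpos_of_mul_nonpos_right h1 htpos'
      simpa [hGdef] using h2
    obtain ⟨lam', hlam', hGeq⟩ := farkas_aux K p F G key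
    set lam : Fin p → ℝ := fun i => if f i x = α i then lam' i else 0 with hlamdef
    set g₁ : X →L[ℝ] ℝ := ∑ i, lam i • f i with hg₁
    refine ⟨g₁, ⟨lam, ?_, ?_, rfl⟩, g - g₁, ?_, by abel⟩
    · intro i
      by_cases hi : f i x = α i <;> simp [hlamdef, hi, hlam' i]
    · intro i hi
      simp [hlamdef, hi]
    · intro u hu
      have hGu := congrFun (congrArg (fun (h : K →ₗ[ℝ] ℝ) => (h : K → ℝ)) hGeq)
        ⟨u, LinearMap.mem_ker.mpr hu⟩
      simp only [hGdef, LinearMap.coe_comp, Function.comp_apply, Submodule.coe_subtype,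
        ContinuousLinearMap.coe_coe, LinearMap.coe_sum, Finset.sum_apply,
        LinearMap.smul_apply, smul_eq_mul] at hGu
      have hsum : ∑ i, lam' i * (F i) ⟨u, LinearMap.mem_ker.mpr hu⟩
          = ∑ i, lam i * f i u := by
        refine Finset.sum_congr rfl fun i _ => ?_
        by_cases hi : f i x = α i <;>
          simp [hFdef, hlamdef, hi]
      rw [hsum] at hGu
      simp only [ContinuousLinearMap.coe_sub', Pi.sub_apply, hg₁,
        ContinuousLinearMap.coe_sum', Finset.sum_apply, ContinuousLinearMap.coe_smul',
        Pi.smul_apply, smul_eq_mul]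
      rw [hGu]
      simp
  · rintro ⟨g₁, ⟨lam, h0, hz, hg1⟩, g₂, hg2, hsum⟩
    intro u hu
    obtain ⟨huA, huf⟩ := hu
    have h2 : g₂ (u - x) = 0 := hg2 _ (by simp [map_sub, huA, hxA])
    have h1 : g₁ (u - x) ≤ 0 := by
      rw [hg1]
      simp only [ContinuousLinearMap.coe_sum', Finset.sum_apply,
        ContinuousLinearMap.coe_smul', Pi.smul_apply, smul_eq_mul, map_sub]
      rw [← Finset.sum_sub_distrib]
      refine Finset.sum_nonpos fun i _ => ?_
      rw [← mul_sub]
      by_cases hi : f i x = α i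
      · have : f i u - f i x ≤ 0 := by rw [hi]; linarith [huf i]
        exact mul_nonpos_of_nonneg_of_nonpos (h0 i) this
      · simp [hz i hi]
    calc g (u - x) = g₁ (u - x) + g₂ (u - x) := by rw [← hsum]; simp
    _ ≤ 0 := by linarith
end

section
/- If D₁ ⊆ X is a polyhedral convex set, D₂ ⊆ X is a generalized polyhedral convex set, and x ∈ D₁ ∩ D₂, then N_{D₁ ∩ D₂}(x) = N_{D₁}(x) + N_{D₂}(x) (exact normal cone intersection rule, with no closure needed). -/
open Pointwise

open Finset in
/-- Algebraic Farkas lemma over an arbitrary real vector space. -/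
lemma farkas_fin {V : Type*} [AddCommGroup V] [Module ℝ V] :
    ∀ (n : ℕ) (f : Fin n → V →ₗ[ℝ] ℝ) (g : V →ₗ[ℝ] ℝ),
    (∀ v, (∀ i, f i v ≤ 0) → g v ≤ 0) →
    ∃ c : Fin n → ℝ, (∀ i, 0 ≤ c i) ∧ ∀ v, g v = ∑ i, c i * f i v := by
  intro n
  induction n with
  | zero =>
    intro f g h
    refine ⟨fun _ => 0, fun i => le_rfl, fun v => ?_⟩
    have h1 := h v (fun i => i.elim0)
    have h2 := h (-v) (fun i => i.elim0)
    simp only [map_neg, neg_nonpos] at h2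
    simpa using le_antisymm h1 h2
  | succ n ih =>
    intro f g h
    by_cases hc : ∀ v, (∀ i : Fin n, f i.succ v ≤ 0) → g v ≤ 0
    · obtain ⟨c, hc0, hsum⟩ := ih (fun i => f i.succ) g hc
      refine ⟨Fin.cons 0 c, ?_, ?_⟩
      · intro i
        refine Fin.cases ?_ ?_ i <;> simp [hc0]
      · intro v
        rw [Fin.sum_univ_succ]
        simpa using hsum v
    · push_neg at hc
      obtain ⟨w₀, hw₀, hgw₀⟩ := hc
      have hf0 : 0 < f 0 w₀ := by
        by_contra hle
        push_neg at hle
        have := h w₀ (fun i => Fin.cases hle (fun j => hw₀ j) i)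
        linarith
      set w := (f 0 w₀)⁻¹ • w₀ with hwdef
      have hfw : f 0 w = 1 := by
        simp only [hwdef, map_smul, smul_eq_mul]
        field_simp
      have hfsw : ∀ i : Fin n, f i.succ w ≤ 0 := by
        intro i
        simp only [hwdef, map_smul, smul_eq_mul]
        exact mul_nonpos_of_nonneg_of_nonpos (inv_nonneg.2 hf0.le) (hw₀ i)
      have hgw : 0 < g w := by
        simp only [hwdef, map_smul, smul_eq_mul]
        exact mul_pos (inv_pos.2 hf0) hgw₀
      set k : Fin n → V →ₗ[ℝ] ℝ := fun i => f i.succ - (f i.succ w) • f 0 with hkdef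
      set g' : V →ₗ[ℝ] ℝ := g - (g w) • f 0 with hg'def
      have hyp : ∀ v, (∀ i, k i v ≤ 0) → g' v ≤ 0 := by
        intro v hv
        have hv' : ∀ i : Fin (n+1), f i (v - (f 0 v) • w) ≤ 0 := by
          intro i
          refine Fin.cases ?_ ?_ i
          · simp [hfw]
          · intro j
            have := hv j
            simp only [hkdef, LinearMap.sub_apply, LinearMap.smul_apply,
              smul_eq_mul] at this
            simp only [map_sub, map_smul, smul_eq_mul]
            linarith
        have := h _ hv'
        simp only [map_sub, map_smul, smul_eq_mul] at this
        simp only [hg'def, LinearMap.sub_apply, LinearMap.smul_apply, smul_eq_mul]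
        linarith
      obtain ⟨μ, hμ0, hμ⟩ := ih k g' hyp
      refine ⟨Fin.cons (g w - ∑ i, μ i * f i.succ w) μ, ?_, ?_⟩
      · intro i
        refine Fin.cases ?_ (fun j => by simpa using hμ0 j) i
        simp only [Fin.cons_zero]
        have hs : ∑ i, μ i * f i.succ w ≤ 0 :=
          Finset.sum_nonpos fun i _ => mul_nonpos_of_nonneg_of_nonpos (hμ0 i) (hfsw i)
        linarith
      · intro v
        have h1 := hμ v
        simp only [hg'def, hkdef, LinearMap.sub_apply, LinearMap.smul_apply,
          smul_eq_mul] at h1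
        rw [Fin.sum_univ_succ]
        simp only [Fin.cons_zero, Fin.cons_succ]
        have hexp : ∑ i, μ i * (f i.succ v - f i.succ w * f 0 v)
            = ∑ i, μ i * f i.succ v - (∑ i, μ i * f i.succ w) * f 0 v := by
          rw [Finset.sum_mul, ← Finset.sum_sub_distrib]
          congr 1; ext i; ring
        rw [hexp] at h1
        ring_nf
        ring_nf at h1
        linarith

lemma farkas_fintype {V : Type*} [AddCommGroup V] [Module ℝ V]
    {ι : Type*} [Fintype ι] (f : ι → V →ₗ[ℝ] ℝ) (g : V →ₗ[ℝ] ℝ)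
    (h : ∀ v, (∀ i, f i v ≤ 0) → g v ≤ 0) :
    ∃ c : ι → ℝ, (∀ i, 0 ≤ c i) ∧ ∀ v, g v = ∑ i, c i * f i v := by
  classical
  set e := Fintype.equivFin ι with hedef
  obtain ⟨c, hc0, hsum⟩ := farkas_fin (Fintype.card ι) (fun j => f (e.symm j)) g
    (fun v hv => h v fun i => by simpa using hv (e i))
  refine ⟨fun i => c (e i), fun i => hc0 _, fun v => ?_⟩
  rw [hsum v]
  exact Fintype.sum_equiv e.symm _ _ (fun j => by simp)

lemma exists_small_t {ι : Type*} [Fintype ι] (a b : ι → ℝ)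
    (h : ∀ i, 0 < a i ∨ (a i = 0 ∧ b i ≤ 0)) :
    ∃ t : ℝ, 0 < t ∧ ∀ i, t * b i ≤ a i := by
  classical
  set c : ι → ℝ := fun i => if 0 < b i then a i / b i else 1 with hcdef
  have hc : ∀ i, 0 < c i := by
    intro i
    simp only [hcdef]
    split_ifs with hb
    · rcases h i with ha | ⟨ha, hb'⟩
      · exact div_pos ha hb
      · linarith
    · exact one_pos
  set S : Finset ℝ := insert (1:ℝ) (Finset.univ.image c) with hSdef
  have hSne : S.Nonempty := ⟨1, by simp [hSdef]⟩
  refine ⟨S.min' hSne, ?_, ?_⟩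
  · rw [Finset.lt_min'_iff]
    intro y hy
    simp only [hSdef, Finset.mem_insert, Finset.mem_image] at hy
    rcases hy with rfl | ⟨i, _, rfl⟩
    · exact one_pos
    · exact hc i
  · intro i
    have ht : S.min' hSne ≤ c i := Finset.min'_le _ _ (by simp [hSdef])
    have htpos : 0 < S.min' hSne := by
      rw [Finset.lt_min'_iff]
      intro y hy
      simp only [hSdef, Finset.mem_insert, Finset.mem_image] at hy
      rcases hy with rfl | ⟨j, _, rfl⟩
      · exact one_pos
      · exact hc j
    by_cases hb : 0 < b i
    · have hci : c i = a i / b i := by simp [hcdef, hb]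
      rw [hci] at ht
      calc S.min' hSne * b i ≤ (a i / b i) * b i := by
            exact mul_le_mul_of_nonneg_right ht hb.le
        _ = a i := by field_simp
    · push_neg at hb
      have hai : 0 ≤ a i := by rcases h i with ha | ⟨ha, _⟩ <;> linarith
      have : S.min' hSne * b i ≤ 0 := mul_nonpos_of_nonneg_of_nonpos htpos.le hb
      linarith

/-- Exact normal cone intersection rule for a polyhedral convex set and a
generalized polyhedral convex set. -/
theorem normalCone_inter_pcs_gpcs {X : Type*} [AddCommGroup X] [Module ℝ X] [TopologicalSpace X]
    [IsTopologicalAddGroup X] [ContinuousSMul ℝ X] [LocallyConvexSpace ℝ X] [T2Space X]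
    (D₁ D₂ : Set X) (h₁ : IsPCS D₁) (h₂ : IsGPCS D₂) (x : X) (hx : x ∈ D₁ ∩ D₂) :
    {g : X →L[ℝ] ℝ | ∀ u ∈ D₁ ∩ D₂, g (u - x) ≤ 0} =
      {g : X →L[ℝ] ℝ | ∀ u ∈ D₁, g (u - x) ≤ 0} +
        {g : X →L[ℝ] ℝ | ∀ u ∈ D₂, g (u - x) ≤ 0} := by
  classical
  obtain ⟨p, f, α, hD₁⟩ := h₁
  obtain ⟨q, hq, β, x₀, W, hWcl, hD₂⟩ := h₂
  obtain ⟨hx1, hx2⟩ := hx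
  have hxf : ∀ i, f i x ≤ α i := by rw [hD₁] at hx1; exact hx1
  rw [hD₂] at hx2
  obtain ⟨hxW0, hxh⟩ := hx2
  have hxW : x - x₀ ∈ W := by
    rw [Set.mem_vadd_set_iff_neg_vadd_mem] at hxW0
    simpa [neg_add_eq_sub] using hxW0
  have hmemW : ∀ u ∈ D₂, u - x ∈ W := by
    intro u hu
    rw [hD₂] at hu
    obtain ⟨huW0, -⟩ := hu
    rw [Set.mem_vadd_set_iff_neg_vadd_mem] at huW0
    have huW : u - x₀ ∈ W := by simpa [neg_add_eq_sub] using huW0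
    have : (u - x₀) - (x - x₀) ∈ W := W.sub_mem huW hxW
    simpa using this
  ext g
  simp only [Set.mem_setOf_eq, Set.mem_add]
  constructor
  · intro hg
    -- the hard inclusion
    set F : Fin p ⊕ Fin q → (X →L[ℝ] ℝ) :=
      Sum.elim (fun i => if f i x = α i then f i else 0)
        (fun j => if hq j x = β j then hq j else 0) with hFdef
    have key : ∀ v : X, v ∈ W → (∀ k, F k v ≤ 0) → g v ≤ 0 := by
      intro v hvW hFv
      have hab : ∀ k, 0 < (Sum.elim (fun i => α i - f i x) (fun j => β j - hq j x)) k ∨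
          ((Sum.elim (fun i => α i - f i x) (fun j => β j - hq j x)) k = 0 ∧
            (Sum.elim (fun i => f i v) (fun j => hq j v)) k ≤ 0) := by
        intro k
        rcases k with i | j
        · simp only [Sum.elim_inl]
          by_cases hi : f i x = α i
          · right
            refine ⟨by linarith, ?_⟩
            have := hFv (Sum.inl i)
            simpa [hFdef, hi] using this
          · left
            have := hxf i
            exact sub_pos.mpr (lt_of_le_of_ne this hi)
        · simp only [Sum.elim_inr]
          by_cases hj : hq j x = β j
          · right
            refine ⟨by linarith, ?_⟩
            have := hFv (Sum.inr j)
            simpa [hFdef, hj] using this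
          · left
            have := hxh j
            exact sub_pos.mpr (lt_of_le_of_ne this hj)
      obtain ⟨t, ht, hta⟩ := exists_small_t _ _ hab
      -- use u = x + t • v
      have hu1 : x + t • v ∈ D₁ := by
        rw [hD₁]
        intro i
        have := hta (Sum.inl i)
        simp only [Sum.elim_inl] at this
        simp only [map_add, map_smul, smul_eq_mul]
        linarith
      have hu2 : x + t • v ∈ D₂ := by
        rw [hD₂]
        refine ⟨?_, ?_⟩
        · rw [Set.mem_vadd_set_iff_neg_vadd_mem]
          have : (x - x₀) + t • v ∈ W := W.add_mem hxW (W.smul_mem t hvW)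
          simpa [neg_add_eq_sub, sub_add_eq_add_sub] using this
        · intro j
          have := hta (Sum.inr j)
          simp only [Sum.elim_inr] at this
          simp only [map_add, map_smul, smul_eq_mul]
          linarith
      have := hg _ ⟨hu1, hu2⟩
      simp only [add_sub_cancel_left, map_smul, smul_eq_mul] at this
      by_contra hgv
      push_neg at hgv
      nlinarith
    obtain ⟨c, hc0, hcsum⟩ := farkas_fintype
      (fun k => ((F k : X →L[ℝ] ℝ) : X →ₗ[ℝ] ℝ).domRestrict W)
      ((g : X →ₗ[ℝ] ℝ).domRestrict W)
      (fun v hv => key v v.2 (fun k => hv k))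
    have hsum : ∀ v ∈ W, g v = ∑ k, c k * F k v := by
      intro v hv
      have := hcsum ⟨v, hv⟩
      simpa using this
    set g₁ : X →L[ℝ] ℝ := ∑ i : Fin p, c (Sum.inl i) • F (Sum.inl i) with hg₁def
    have hg₁app : ∀ v, g₁ v = ∑ i : Fin p, c (Sum.inl i) * F (Sum.inl i) v := by
      intro v
      simp [hg₁def, ContinuousLinearMap.sum_apply]
    refine ⟨g₁, ?_, g - g₁, ?_, by abel⟩
    · intro u hu
      rw [hD₁] at hu
      rw [hg₁app]
      refine Finset.sum_nonpos fun i _ => ?_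
      refine mul_nonpos_of_nonneg_of_nonpos (hc0 _) ?_
      by_cases hi : f i x = α i
      · simp only [hFdef, Sum.elim_inl, if_pos hi, map_sub]
        have := hu i
        linarith [hu i, hi.ge]
      · simp [hFdef, Sum.elim_inl, if_neg hi]
    · intro u hu
      have huW := hmemW u hu
      rw [hD₂] at hu
      have hgu : g (u - x) = ∑ k, c k * F k (u - x) := hsum _ huW
      have hsplit : ∑ k, c k * F k (u - x)
          = (∑ i : Fin p, c (Sum.inl i) * F (Sum.inl i) (u - x))
            + ∑ j : Fin q, c (Sum.inr j) * F (Sum.inr j) (u - x) := by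
        rw [Fintype.sum_sum_type]
      have h2 : ∑ j : Fin q, c (Sum.inr j) * F (Sum.inr j) (u - x) ≤ 0 := by
        refine Finset.sum_nonpos fun j _ => ?_
        refine mul_nonpos_of_nonneg_of_nonpos (hc0 _) ?_
        by_cases hj : hq j x = β j
        · simp only [hFdef, Sum.elim_inr, if_pos hj, map_sub]
          have := hu.2 j
          linarith [hu.2 j, hj.ge]
        · simp [hFdef, Sum.elim_inr, if_neg hj]
      have : (g - g₁) (u - x) = g (u - x) - g₁ (u - x) := rfl
      rw [this, hgu, hsplit, hg₁app]
      linarith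
  · rintro ⟨g₁, hg₁, g₂, hg₂, rfl⟩
    intro u hu
    have := hg₁ u hu.1
    have := hg₂ u hu.2
    simp only [ContinuousLinearMap.add_apply]
    linarith
end
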